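/- arXiv:2308.15461 — 4 statements merged into one kernel-verified Lean document; each statement's English description precedes it below -/
import Mathlib

section
/- Let U, V be m×n real matrices, D an n×n real diagonal matrix, and let ‖·‖ be any unitarily invariant matrix norm. Then ‖U D Vᵀ‖ ≤ (1/2)·(‖|D|^{1/2} Uᵀ U |D|^{1/2}‖ + ‖|D|^{1/2} Vᵀ V |D|^{1/2}‖), where |D| denotes the entrywise absolute value of D (equivalently (DᵀD)^{1/2}), and norms of matrices of differing sizes are interpreted via zero-padding dilation. -/
open Matrix

/-- Zero-padding of a `p×q` matrix to an `r×r` matrix. -/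
def padMat {p q : ℕ} (r : ℕ) (A : Matrix (Fin p) (Fin q) ℝ) :
    Matrix (Fin r) (Fin r) ℝ :=
  Matrix.of fun i j =>
    if hi : (i : ℕ) < p then
      if hj : (j : ℕ) < q then A ⟨i, hi⟩ ⟨j, hj⟩ else 0
    else 0


section Helpers

variable {r : ℕ} {N : Matrix (Fin r) (Fin r) ℝ → ℝ}

theorem N_zero (hhom : ∀ (c : ℝ) (A : Matrix (Fin r) (Fin r) ℝ), N (c • A) = |c| * N A) :
    N 0 = 0 := by
  have := hhom 0 0
  simpa using this

theorem N_neg (hhom : ∀ (c : ℝ) (A : Matrix (Fin r) (Fin r) ℝ), N (c • A) = |c| * N A)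
    (A : Matrix (Fin r) (Fin r) ℝ) : N (-A) = N A := by
  have := hhom (-1) A
  simpa using this

theorem N_nonneg (hsub : ∀ A B : Matrix (Fin r) (Fin r) ℝ, N (A + B) ≤ N A + N B)
    (hhom : ∀ (c : ℝ) (A : Matrix (Fin r) (Fin r) ℝ), N (c • A) = |c| * N A)
    (A : Matrix (Fin r) (Fin r) ℝ) : 0 ≤ N A := by
  have h := hsub A (-A)
  rw [add_neg_cancel, N_zero hhom, N_neg hhom] at h
  linarith

/-- diagonal sign matrices are orthogonal -/
theorem sign_diag_orth (t : Fin r → ℝ) (ht : ∀ i, t i = 1 ∨ t i = -1) :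
    (Matrix.diagonal t)ᵀ * Matrix.diagonal t = 1 := by
  rw [Matrix.diagonal_transpose, Matrix.diagonal_mul_diagonal, ← Matrix.diagonal_one]
  have : (fun i => t i * t i) = fun _ => (1 : ℝ) := by
    funext i
    rcases ht i with h | h <;> rw [h] <;> norm_num
  rw [this]

/-- Pinching: the norm of the diagonal part is at most the norm of the matrix. -/
theorem pinching (hsub : ∀ A B : Matrix (Fin r) (Fin r) ℝ, N (A + B) ≤ N A + N B)
    (hhom : ∀ (c : ℝ) (A : Matrix (Fin r) (Fin r) ℝ), N (c • A) = |c| * N A)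
    (hinv : ∀ Q W A : Matrix (Fin r) (Fin r) ℝ,
      Qᵀ * Q = 1 → Wᵀ * W = 1 → N (Q * A * W) = N A)
    (M : Matrix (Fin r) (Fin r) ℝ) :
    N (Matrix.diagonal (fun i => M i i)) ≤ N M := by
  classical
  set E : ℕ → Matrix (Fin r) (Fin r) ℝ := fun k => Matrix.of fun i j =>
    if i = j ∨ (k ≤ (i : ℕ) ∧ k ≤ (j : ℕ)) then M i j else 0 with hE
  have h0 : E 0 = M := by
    ext i j
    simp [hE]
  have hend : E r = Matrix.diagonal (fun i => M i i) := by
    ext i j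
    by_cases hij : i = j
    · subst hij; simp [hE]
    · have : ¬ (r ≤ (i : ℕ)) := by omega
      simp [hE, hij, this, Matrix.diagonal_apply_ne _ hij]
  have hstep : ∀ k, N (E (k + 1)) ≤ N (E k) := by
    intro k
    set f : Fin r → ℝ := fun i => if (i : ℕ) = k then (-1 : ℝ) else 1 with hf
    set F : Matrix (Fin r) (Fin r) ℝ := Matrix.diagonal f with hF
    have hFo : Fᵀ * F = 1 := by
      apply sign_diag_orth
      intro i
      by_cases h : (i : ℕ) = k <;> simp [hf, h]
    have hid : E (k + 1) = (2⁻¹ : ℝ) • (E k + F * E k * F) := by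
      ext i j
      have hFEF : (F * E k * F) i j = f i * (E k i j) * f j := by
        rw [Matrix.mul_diagonal, Matrix.diagonal_mul]
      simp only [Matrix.smul_apply, Matrix.add_apply, hFEF, smul_eq_mul]
      by_cases hij : i = j
      · subst hij
        simp only [hE, Matrix.of_apply, true_or, if_pos]
        by_cases hik : (i : ℕ) = k <;> simp [hf, hik] <;> ring
      · by_cases hik : (i : ℕ) = k
        · by_cases hjk : (j : ℕ) = k
          · exact absurd (Fin.val_injective (hik.trans hjk.symm)) hij
          · have h1 : ¬ (i = j ∨ (k + 1 ≤ (i : ℕ) ∧ k + 1 ≤ (j : ℕ))) := by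
              simp only [not_or]
              exact ⟨hij, by omega⟩
            simp only [hE, Matrix.of_apply, if_neg h1, hf, if_pos hik, if_neg hjk]
            ring
        · by_cases hjk : (j : ℕ) = k
          · have h1 : ¬ (i = j ∨ (k + 1 ≤ (i : ℕ) ∧ k + 1 ≤ (j : ℕ))) := by
              simp only [not_or]
              exact ⟨hij, by omega⟩
            simp only [hE, Matrix.of_apply, if_neg h1, hf, if_pos hjk, if_neg hik]
            ring
          · have hiff : (i = j ∨ (k + 1 ≤ (i : ℕ) ∧ k + 1 ≤ (j : ℕ)))
                ↔ (i = j ∨ (k ≤ (i : ℕ) ∧ k ≤ (j : ℕ))) := by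
              constructor
              · rintro (h | h)
                · exact Or.inl h
                · exact Or.inr ⟨by omega, by omega⟩
              · rintro (h | h)
                · exact Or.inl h
                · exact Or.inr ⟨by omega, by omega⟩
            simp only [hE, Matrix.of_apply, hf, if_neg hik, if_neg hjk]
            rw [if_congr hiff rfl rfl]
            ring
    have hNF : N (F * E k * F) = N (E k) := hinv F F (E k) hFo hFo
    calc N (E (k + 1)) = |(2⁻¹ : ℝ)| * N (E k + F * E k * F) := by rw [hid, hhom]
      _ ≤ |(2⁻¹ : ℝ)| * (N (E k) + N (F * E k * F)) := by
          apply mul_le_mul_of_nonneg_left (hsub _ _) (abs_nonneg _)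
      _ = N (E k) := by rw [hNF, abs_of_pos (by norm_num : (0:ℝ) < 2⁻¹)]; ring
  have hchain : ∀ k, N (E k) ≤ N (E 0) := by
    intro k
    induction k with
    | zero => exact le_rfl
    | succ k ih => exact le_trans (hstep k) ih
  have := hchain r
  rw [h0] at this
  rw [← hend]
  exact this

end Helpers

section Scal

variable {r : ℕ} {N : Matrix (Fin r) (Fin r) ℝ → ℝ}

/-- Multiplying by a diagonal contraction does not increase the norm. -/
theorem diag_contraction
    (hsub : ∀ A B : Matrix (Fin r) (Fin r) ℝ, N (A + B) ≤ N A + N B)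
    (hhom : ∀ (c : ℝ) (A : Matrix (Fin r) (Fin r) ℝ), N (c • A) = |c| * N A)
    (hinv : ∀ Q W A : Matrix (Fin r) (Fin r) ℝ,
      Qᵀ * Q = 1 → Wᵀ * W = 1 → N (Q * A * W) = N A)
    (t : Fin r → ℝ) (M : Matrix (Fin r) (Fin r) ℝ) (ht : ∀ i, |t i| ≤ 1) :
    N (Matrix.diagonal t * M) ≤ N M := by
  classical
  suffices H : ∀ k (t : Fin r → ℝ), (∀ i, |t i| ≤ 1) →
      (∀ i : Fin r, k ≤ (i : ℕ) → t i = 1 ∨ t i = -1) →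
      N (Matrix.diagonal t * M) ≤ N M by
    exact H r t ht (fun i hi => absurd hi (by omega))
  intro k
  induction k with
  | zero =>
    intro t ht1 hpm
    have horth : (Matrix.diagonal t)ᵀ * Matrix.diagonal t = 1 :=
      sign_diag_orth t (fun i => hpm i (Nat.zero_le _))
    have := hinv (Matrix.diagonal t) 1 M horth (by simp)
    rw [Matrix.mul_one] at this
    rw [this]
  | succ k ih =>
    intro t ht1 hpm
    by_cases hkr : k < r
    · set j : Fin r := ⟨k, hkr⟩ with hj
      set cp : ℝ := (1 + t j) / 2 with hcp
      set cm : ℝ := (1 - t j) / 2 with hcm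
      have htj : |t j| ≤ 1 := ht1 j
      have hcp0 : 0 ≤ cp := by rw [hcp]; rw [abs_le] at htj; linarith
      have hcm0 : 0 ≤ cm := by rw [hcm]; rw [abs_le] at htj; linarith
      set tp : Fin r → ℝ := Function.update t j 1 with htp
      set tm : Fin r → ℝ := Function.update t j (-1) with htm
      have hdiag : Matrix.diagonal t = cp • Matrix.diagonal tp + cm • Matrix.diagonal tm := by
        ext i i'
        by_cases hii : i = i'
        · subst hii
          simp only [Matrix.add_apply, Matrix.smul_apply, Matrix.diagonal_apply_eq, smul_eq_mul]
          by_cases hij : i = j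
          · subst hij
            simp only [htp, htm, Function.update_self]
            rw [hcp, hcm]; ring
          · simp only [htp, htm, Function.update_of_ne hij]
            rw [hcp, hcm]; ring
        · simp [Matrix.diagonal_apply_ne _ hii]
      have hkey : Matrix.diagonal t * M
          = cp • (Matrix.diagonal tp * M) + cm • (Matrix.diagonal tm * M) := by
        rw [hdiag, Matrix.add_mul, Matrix.smul_mul, Matrix.smul_mul]
      have hplus : N (Matrix.diagonal tp * M) ≤ N M := by
        apply ih
        · intro i
          by_cases hij : i = j
          · subst hij; simp [htp]
          · simp only [htp, Function.update_of_ne hij]; exact ht1 i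
        · intro i hki
          by_cases hij : i = j
          · subst hij; simp [htp]
          · simp only [htp, Function.update_of_ne hij]
            apply hpm
            have : (i : ℕ) ≠ k := fun h => hij (Fin.ext h)
            omega
      have hminus : N (Matrix.diagonal tm * M) ≤ N M := by
        apply ih
        · intro i
          by_cases hij : i = j
          · subst hij; simp [htm]
          · simp only [htm, Function.update_of_ne hij]; exact ht1 i
        · intro i hki
          by_cases hij : i = j
          · subst hij; simp [htm]
          · simp only [htm, Function.update_of_ne hij]
            apply hpm
            have : (i : ℕ) ≠ k := fun h => hij (Fin.ext h)
            omega
      calc N (Matrix.diagonal t * M)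
          ≤ N (cp • (Matrix.diagonal tp * M)) + N (cm • (Matrix.diagonal tm * M)) := by
            rw [hkey]; exact hsub _ _
        _ = cp * N (Matrix.diagonal tp * M) + cm * N (Matrix.diagonal tm * M) := by
            rw [hhom, hhom, abs_of_nonneg hcp0, abs_of_nonneg hcm0]
        _ ≤ cp * N M + cm * N M := by
            have := mul_le_mul_of_nonneg_left hplus hcp0
            have := mul_le_mul_of_nonneg_left hminus hcm0
            linarith
        _ = N M := by rw [hcp, hcm]; ring
    · exact ih t ht1 (fun i hi => absurd i.isLt (by omega))

/-- Entrywise domination for diagonal matrices. -/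
theorem diag_mono
    (hsub : ∀ A B : Matrix (Fin r) (Fin r) ℝ, N (A + B) ≤ N A + N B)
    (hhom : ∀ (c : ℝ) (A : Matrix (Fin r) (Fin r) ℝ), N (c • A) = |c| * N A)
    (hinv : ∀ Q W A : Matrix (Fin r) (Fin r) ℝ,
      Qᵀ * Q = 1 → Wᵀ * W = 1 → N (Q * A * W) = N A)
    (g h : Fin r → ℝ) (hgh : ∀ i, |g i| ≤ h i) :
    N (Matrix.diagonal g) ≤ N (Matrix.diagonal h) := by
  classical
  set t : Fin r → ℝ := fun i => if h i = 0 then 0 else g i / h i with htd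
  have hfun : ∀ i, t i * h i = g i := by
    intro i
    by_cases hi : h i = 0
    · have : |g i| ≤ 0 := by rw [← hi]; exact hgh i
      have hg0 : g i = 0 := abs_nonpos_iff.mp this
      simp [htd, hi, hg0]
    · simp only [htd, if_neg hi]
      field_simp
  have hfac : Matrix.diagonal g = Matrix.diagonal t * Matrix.diagonal h := by
    rw [Matrix.diagonal_mul_diagonal]
    exact congrArg Matrix.diagonal (funext fun i => (hfun i).symm)
  have ht1 : ∀ i, |t i| ≤ 1 := by
    intro i
    by_cases hi : h i = 0
    · simp [htd, hi]
    · have hhpos : 0 < h i := lt_of_le_of_ne ((abs_nonneg _).trans (hgh i)) (Ne.symm hi)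
      simp only [htd, if_neg hi, abs_div, abs_of_pos hhpos]
      rw [div_le_one hhpos]
      exact hgh i
  rw [hfac]
  exact diag_contraction hsub hhom hinv t _ ht1

end Scal

theorem star_eq_transpose {r : ℕ} (M : Matrix (Fin r) (Fin r) ℝ) : star M = Mᵀ := by
  ext i j
  simp [Matrix.star_apply, Matrix.transpose_apply]

/-- Real SVD for square matrices. -/
theorem real_svd {r : ℕ} (C : Matrix (Fin r) (Fin r) ℝ) :
    ∃ (Q W : Matrix (Fin r) (Fin r) ℝ) (g : Fin r → ℝ),
      Qᵀ * Q = 1 ∧ Wᵀ * W = 1 ∧ (∀ i, 0 ≤ g i) ∧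
      C = Q * Matrix.diagonal g * Wᵀ := by
  classical
  have hps : (Cᴴ * C).PosSemidef := Matrix.posSemidef_conjTranspose_mul_self C
  have hH : (Cᴴ * C).IsHermitian := hps.isHermitian
  set W : Matrix (Fin r) (Fin r) ℝ := (hH.eigenvectorUnitary : Matrix (Fin r) (Fin r) ℝ) with hW
  have hWmem := (hH.eigenvectorUnitary).2
  have hWsW : Wᵀ * W = 1 := by
    rw [← star_eq_transpose]
    exact (Matrix.mem_unitaryGroup_iff').mp hWmem
  have hWWs : W * Wᵀ = 1 := by
    rw [← star_eq_transpose]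
    exact (Matrix.mem_unitaryGroup_iff).mp hWmem
  set d : Fin r → ℝ := hH.eigenvalues with hd
  have hd0 : ∀ i, 0 ≤ d i := fun i => hps.eigenvalues_nonneg i
  have hspec : Cᴴ * C = W * Matrix.diagonal d * Wᵀ := by
    have := hH.spectral_theorem
    rw [← star_eq_transpose]
    rw [Unitary.conjStarAlgAut_apply] at this
    convert this using 3
    · rfl
    · rfl
    · simp [d]
  have hCt : Cᴴ = Cᵀ := star_eq_transpose C
  set A : Matrix (Fin r) (Fin r) ℝ := C * W with hA
  have hAtA : Aᵀ * A = Matrix.diagonal d := by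
    have : Aᵀ * A = Wᵀ * (Cᵀ * C) * W := by
      rw [hA, Matrix.transpose_mul]; noncomm_ring
    rw [this, ← hCt, hspec]
    calc Wᵀ * (W * Matrix.diagonal d * Wᵀ) * W
        = (Wᵀ * W) * Matrix.diagonal d * (Wᵀ * W) := by noncomm_ring
      _ = Matrix.diagonal d := by rw [hWsW]; simp
  have hcol : ∀ i j, ∑ k, A k i * A k j = Matrix.diagonal d i j := by
    intro i j
    rw [← hAtA]
    simp [Matrix.mul_apply, Matrix.transpose_apply]
  -- columns as Euclidean vectors
  set v : Fin r → EuclideanSpace ℝ (Fin r) :=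
    fun i => (Real.sqrt (d i))⁻¹ • ((WithLp.equiv 2 (Fin r → ℝ)).symm (fun k => A k i)) with hv
  set s : Set (Fin r) := {i | d i ≠ 0} with hs
  have hvon : Orthonormal ℝ (s.restrict v) := by
    rw [orthonormal_iff_ite]
    rintro ⟨i, hi⟩ ⟨j, hj⟩
    have hinner : (inner ℝ (v i) (v j) : ℝ)
        = (Real.sqrt (d i))⁻¹ * (Real.sqrt (d j))⁻¹ * Matrix.diagonal d i j := by
      rw [← hcol i j]
      simp only [hv, PiLp.inner_apply, PiLp.smul_apply, WithLp.equiv_symm_apply, PiLp.toLp_apply,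
        smul_eq_mul, RCLike.inner_apply, starRingEnd_apply, star_trivial]
      rw [Finset.mul_sum]
      apply Finset.sum_congr rfl
      intro k _
      ring
    by_cases hij : i = j
    · subst hij
      change inner ℝ (v i) (v i) = _
      simp only [hinner]
      have hdi : 0 < d i := lt_of_le_of_ne (hd0 i) (Ne.symm hi)
      rw [if_true, Matrix.diagonal_apply_eq]
      rw [← Real.sqrt_mul_self (hd0 i)] 
      field_simp
      rw [Real.sq_sqrt (Real.sqrt_nonneg _)]
    · have : (⟨i, hi⟩ : s) ≠ ⟨j, hj⟩ := by simpa [Subtype.ext_iff] using hij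
      rw [if_neg this]
      change inner ℝ (v i) (v j) = _
      simp only [hinner, Matrix.diagonal_apply_ne _ hij, mul_zero]
  obtain ⟨b, hb⟩ := hvon.exists_orthonormalBasis_extension_of_card_eq (by simp)
  set Q : Matrix (Fin r) (Fin r) ℝ := Matrix.of (fun k i => b i k) with hQ
  have hQQ : Qᵀ * Q = 1 := by
    ext i j
    have := orthonormal_iff_ite.mp b.orthonormal i j
    simp only [PiLp.inner_apply, RCLike.inner_apply, starRingEnd_apply, star_trivial] at this
    simp only [Matrix.mul_apply, Matrix.transpose_apply, hQ, Matrix.of_apply, Matrix.one_apply]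
    rw [← this]
    exact Finset.sum_congr rfl fun _ _ => mul_comm _ _
  have hAQ : A = Q * Matrix.diagonal (fun i => Real.sqrt (d i)) := by
    ext k i
    rw [Matrix.mul_diagonal]
    simp only [hQ, Matrix.of_apply]
    by_cases hi : i ∈ s
    · rw [hb i hi]
      have hdi : 0 < d i := lt_of_le_of_ne (hd0 i) (Ne.symm hi)
      have hsq : Real.sqrt (d i) ≠ 0 := ne_of_gt (Real.sqrt_pos.mpr hdi)
      simp only [hv, PiLp.smul_apply, WithLp.equiv_symm_apply, PiLp.toLp_apply, smul_eq_mul]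
      field_simp
    · have hdi : d i = 0 := not_not.mp hi
      have hzero : A k i = 0 := by
        have hsum : ∑ l, A l i * A l i = 0 := by
          rw [hcol i i, Matrix.diagonal_apply_eq, hdi]
        have := (Finset.sum_eq_zero_iff_of_nonneg
          (fun l _ => mul_self_nonneg (A l i))).mp hsum k (Finset.mem_univ k)
        exact mul_self_eq_zero.mp this
      rw [hzero, hdi, Real.sqrt_zero, mul_zero]
  refine ⟨Q, W, fun i => Real.sqrt (d i), hQQ, hWsW, fun i => Real.sqrt_nonneg _, ?_⟩
  rw [← hAQ, hA]
  rw [Matrix.mul_assoc, hWWs, Matrix.mul_one]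

section AGM

variable {r : ℕ} {N : Matrix (Fin r) (Fin r) ℝ → ℝ}

theorem N_mul_transpose_comm
    (hinv : ∀ Q W A : Matrix (Fin r) (Fin r) ℝ,
      Qᵀ * Q = 1 → Wᵀ * W = 1 → N (Q * A * W) = N A)
    (X : Matrix (Fin r) (Fin r) ℝ) : N (X * Xᵀ) = N (Xᵀ * X) := by
  obtain ⟨Q, W, g, hQ, hW, hg, hX⟩ := real_svd X
  have hQQ : Q * Qᵀ = 1 := mul_eq_one_comm.mp hQ
  have hWW : W * Wᵀ = 1 := mul_eq_one_comm.mp hW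
  have hXt : Xᵀ = W * Matrix.diagonal g * Qᵀ := by
    rw [hX]
    rw [Matrix.transpose_mul, Matrix.transpose_mul, Matrix.transpose_transpose,
      Matrix.diagonal_transpose, Matrix.mul_assoc]
  have h1 : X * Xᵀ = Q * (Matrix.diagonal g * Matrix.diagonal g) * Qᵀ := by
    rw [hXt, hX]
    calc Q * Matrix.diagonal g * Wᵀ * (W * Matrix.diagonal g * Qᵀ)
        = Q * Matrix.diagonal g * (Wᵀ * W) * Matrix.diagonal g * Qᵀ := by
          noncomm_ring
      _ = Q * (Matrix.diagonal g * Matrix.diagonal g) * Qᵀ := by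
          rw [hW]; noncomm_ring
  have h2 : Xᵀ * X = W * (Matrix.diagonal g * Matrix.diagonal g) * Wᵀ := by
    rw [hXt, hX]
    calc W * Matrix.diagonal g * Qᵀ * (Q * Matrix.diagonal g * Wᵀ)
        = W * Matrix.diagonal g * (Qᵀ * Q) * Matrix.diagonal g * Wᵀ := by
          noncomm_ring
      _ = W * (Matrix.diagonal g * Matrix.diagonal g) * Wᵀ := by
          rw [hQ]; noncomm_ring
  rw [h1, h2, hinv Q Qᵀ _ hQ (by rwa [Matrix.transpose_transpose]),
    hinv W Wᵀ _ hW (by rwa [Matrix.transpose_transpose])]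

/-- Core matrix AGM inequality for the seminorm `N`. -/
theorem core_agm
    (hsub : ∀ A B : Matrix (Fin r) (Fin r) ℝ, N (A + B) ≤ N A + N B)
    (hhom : ∀ (c : ℝ) (A : Matrix (Fin r) (Fin r) ℝ), N (c • A) = |c| * N A)
    (hinv : ∀ Q W A : Matrix (Fin r) (Fin r) ℝ,
      Qᵀ * Q = 1 → Wᵀ * W = 1 → N (Q * A * W) = N A)
    (X Y : Matrix (Fin r) (Fin r) ℝ) :
    N (X * Yᵀ) ≤ 1 / 2 * (N (Xᵀ * X) + N (Yᵀ * Y)) := by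
  obtain ⟨Q, W, g, hQ, hW, hg, hC⟩ := real_svd (X * Yᵀ)
  have hQQ : Q * Qᵀ = 1 := mul_eq_one_comm.mp hQ
  have hWW : W * Wᵀ = 1 := mul_eq_one_comm.mp hW
  set A : Matrix (Fin r) (Fin r) ℝ := Xᵀ * Q with hA
  set B : Matrix (Fin r) (Fin r) ℝ := Yᵀ * W with hB
  have hAB : Aᵀ * B = Matrix.diagonal g := by
    rw [hA, hB, Matrix.transpose_mul, Matrix.transpose_transpose]
    calc Qᵀ * X * (Yᵀ * W) = Qᵀ * (X * Yᵀ) * W := by noncomm_ring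
      _ = Qᵀ * (Q * Matrix.diagonal g * Wᵀ) * W := by rw [hC]
      _ = (Qᵀ * Q) * Matrix.diagonal g * (Wᵀ * W) := by noncomm_ring
      _ = Matrix.diagonal g := by rw [hQ, hW]; noncomm_ring
  set h : Fin r → ℝ := fun i => (1 / 2 : ℝ) * ((Aᵀ * A) i i + (Bᵀ * B) i i) with hh
  have hgh : ∀ i, |g i| ≤ h i := by
    intro i
    have hgi : g i = ∑ k, A k i * B k i := by
      have := congrArg (fun M => M i i) hAB
      simp only [Matrix.diagonal_apply_eq] at this
      rw [← this]
      simp [Matrix.mul_apply, Matrix.transpose_apply]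
    have hAi : (Aᵀ * A) i i = ∑ k, A k i * A k i := by
      simp [Matrix.mul_apply, Matrix.transpose_apply]
    have hBi : (Bᵀ * B) i i = ∑ k, B k i * B k i := by
      simp [Matrix.mul_apply, Matrix.transpose_apply]
    rw [abs_of_nonneg (hg i), hgi]
    simp only [hh]
    rw [hAi, hBi, ← Finset.sum_add_distrib, Finset.mul_sum]
    apply Finset.sum_le_sum
    intro k _
    nlinarith [sq_nonneg (A k i - B k i)]
  have hNg : N (X * Yᵀ) = N (Matrix.diagonal g) := by
    rw [hC]
    exact hinv Q Wᵀ _ hQ (by rwa [Matrix.transpose_transpose])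
  have hstep1 : N (Matrix.diagonal g) ≤ N (Matrix.diagonal h) :=
    diag_mono hsub hhom hinv g h hgh
  have hdiagh : Matrix.diagonal h = (1 / 2 : ℝ) •
      (Matrix.diagonal (fun i => (Aᵀ * A) i i) + Matrix.diagonal (fun i => (Bᵀ * B) i i)) := by
    rw [Matrix.diagonal_add, ← Matrix.diagonal_smul]
    congr 1
  have hstep2 : N (Matrix.diagonal h)
      ≤ 1 / 2 * (N (Matrix.diagonal (fun i => (Aᵀ * A) i i))
        + N (Matrix.diagonal (fun i => (Bᵀ * B) i i))) := by
    rw [hdiagh, hhom, abs_of_pos (by norm_num : (0:ℝ) < 1/2)]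
    exact mul_le_mul_of_nonneg_left (hsub _ _) (by norm_num)
  have hpinchA : N (Matrix.diagonal (fun i => (Aᵀ * A) i i)) ≤ N (Aᵀ * A) :=
    pinching hsub hhom hinv _
  have hpinchB : N (Matrix.diagonal (fun i => (Bᵀ * B) i i)) ≤ N (Bᵀ * B) :=
    pinching hsub hhom hinv _
  have hNA : N (Aᵀ * A) = N (Xᵀ * X) := by
    have h1 : Aᵀ * A = Qᵀ * (X * Xᵀ) * Q := by
      rw [hA, Matrix.transpose_mul, Matrix.transpose_transpose]; noncomm_ring
    rw [h1, hinv Qᵀ Q _ (by rwa [Matrix.transpose_transpose]) hQ]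
    exact N_mul_transpose_comm hinv X
  have hNB : N (Bᵀ * B) = N (Yᵀ * Y) := by
    have h1 : Bᵀ * B = Wᵀ * (Y * Yᵀ) * W := by
      rw [hB, Matrix.transpose_mul, Matrix.transpose_transpose]; noncomm_ring
    rw [h1, hinv Wᵀ W _ (by rwa [Matrix.transpose_transpose]) hW]
    exact N_mul_transpose_comm hinv Y
  rw [hNg]
  linarith

end AGM

theorem sum_pad {q r : ℕ} (hq : q ≤ r) (φ : Fin q → ℝ) :
    ∑ k : Fin r, (if h : (k : ℕ) < q then φ ⟨k, h⟩ else 0) = ∑ k : Fin q, φ k := by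
  rw [Fin.sum_univ_eq_sum_range (fun k => if h : k < q then φ ⟨k, h⟩ else 0) r]
  have h2 : ∑ k : Fin q, φ k
      = ∑ i ∈ Finset.range q, (if h : i < q then φ ⟨i, h⟩ else 0) := by
    rw [← Fin.sum_univ_eq_sum_range (fun k => if h : k < q then φ ⟨k, h⟩ else 0) q]
    exact Finset.sum_congr rfl (fun k _ => by simp [k.isLt])
  rw [h2]
  symm
  apply Finset.sum_subset (Finset.range_subset_range.mpr hq)
  intro x _ hx
  rw [Finset.mem_range] at hx
  rw [dif_neg hx]

theorem padMat_transpose {p q r : ℕ} (A : Matrix (Fin p) (Fin q) ℝ) :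
    (padMat r A)ᵀ = padMat r Aᵀ := by
  ext i j
  simp only [Matrix.transpose_apply, padMat, Matrix.of_apply]
  by_cases hi : (i : ℕ) < q <;> by_cases hj : (j : ℕ) < p <;> simp [hi, hj]

theorem padMat_mul {p q t r : ℕ} (hq : q ≤ r)
    (A : Matrix (Fin p) (Fin q) ℝ) (B : Matrix (Fin q) (Fin t) ℝ) :
    padMat r A * padMat r B = padMat r (A * B) := by
  ext i j
  rw [Matrix.mul_apply]
  by_cases hi : (i : ℕ) < p
  · by_cases hj : (j : ℕ) < t
    · have hterm : ∀ k : Fin r, padMat r A i k * padMat r B k j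
          = if h : (k : ℕ) < q then A ⟨i, hi⟩ ⟨k, h⟩ * B ⟨k, h⟩ ⟨j, hj⟩ else 0 := by
        intro k
        by_cases hk : (k : ℕ) < q <;> simp [padMat, hi, hj, hk]
      calc ∑ k : Fin r, padMat r A i k * padMat r B k j
          = ∑ k : Fin r, (if h : (k : ℕ) < q
              then A ⟨i, hi⟩ ⟨k, h⟩ * B ⟨k, h⟩ ⟨j, hj⟩ else 0) := by
            exact Finset.sum_congr rfl fun k _ => hterm k
        _ = ∑ k : Fin q, A ⟨i, hi⟩ k * B k ⟨j, hj⟩ := sum_pad hq (fun k => A ⟨i, hi⟩ k * B k ⟨j, hj⟩)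
        _ = padMat r (A * B) i j := by simp [padMat, hi, hj, Matrix.mul_apply]
    · have : padMat r (A * B) i j = 0 := by simp [padMat, hj]
      rw [this]
      apply Finset.sum_eq_zero
      intro k _
      have : padMat r B k j = 0 := by simp [padMat, hj]
      rw [this, mul_zero]
  · have : padMat r (A * B) i j = 0 := by simp [padMat, hi]
    rw [this]
    apply Finset.sum_eq_zero
    intro k _
    have : padMat r A i k = 0 := by simp [padMat, hi]
    rw [this, zero_mul]
theorem shat_pad {n t r : ℕ} (hn : n ≤ r) (s : Fin n → ℝ) (B : Matrix (Fin n) (Fin t) ℝ) :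
    Matrix.diagonal (fun i : Fin r => if h : (i : ℕ) < n then s ⟨i, h⟩ else 1) * padMat r B
      = padMat r (Matrix.diagonal s * B) := by
  ext i j
  rw [Matrix.diagonal_mul]
  by_cases hi : (i : ℕ) < n
  · by_cases hj : (j : ℕ) < t
    · simp [padMat, hi, hj, Matrix.diagonal_mul]
    · simp [padMat, hi, hj]
  · simp [padMat, hi]

/-- Matrix arithmetic-geometric mean inequality for unitarily invariant norms:
for `U, V : m×n`, `D = diag(d) : n×n`, and any unitarily invariant matrix norm
`N` (on `r×r` matrices, with matrices of differing sizes zero-padded),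
`N(U D Vᵀ) ≤ (1/2)(N(|D|^{1/2} Uᵀ U |D|^{1/2}) + N(|D|^{1/2} Vᵀ V |D|^{1/2}))`. -/
theorem stmt3 (m n r : ℕ) (hm : m ≤ r) (hn : n ≤ r)
    (U V : Matrix (Fin m) (Fin n) ℝ) (d : Fin n → ℝ)
    (N : Matrix (Fin r) (Fin r) ℝ → ℝ)
    (hsub : ∀ A B : Matrix (Fin r) (Fin r) ℝ, N (A + B) ≤ N A + N B)
    (hhom : ∀ (c : ℝ) (A : Matrix (Fin r) (Fin r) ℝ), N (c • A) = |c| * N A)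
    (hinv : ∀ Q W A : Matrix (Fin r) (Fin r) ℝ,
      Qᵀ * Q = 1 → Wᵀ * W = 1 → N (Q * A * W) = N A) :
    N (padMat r (U * Matrix.diagonal d * Vᵀ))
      ≤ (1 / 2) *
        (N (padMat r (Matrix.diagonal (fun i => Real.sqrt |d i|) * Uᵀ * U *
              Matrix.diagonal (fun i => Real.sqrt |d i|)))
          + N (padMat r (Matrix.diagonal (fun i => Real.sqrt |d i|) * Vᵀ * V *
              Matrix.diagonal (fun i => Real.sqrt |d i|)))) := by
  classical
  set E : Matrix (Fin n) (Fin n) ℝ := Matrix.diagonal (fun i => Real.sqrt |d i|) with hE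
  set sgn : Fin n → ℝ := fun i => if d i < 0 then (-1 : ℝ) else 1 with hsgn
  set fr : Fin r → ℝ := fun i => if h : (i : ℕ) < n then sgn ⟨i, h⟩ else 1 with hfr
  set Shat : Matrix (Fin r) (Fin r) ℝ := Matrix.diagonal fr with hShat
  have hfr_pm : ∀ i, fr i = 1 ∨ fr i = -1 := by
    intro i
    by_cases h : (i : ℕ) < n
    · by_cases h2 : d ⟨i, h⟩ < 0
      · right; simp [hfr, h, hsgn, h2]
      · left; simp [hfr, h, hsgn, h2]
    · left; simp [hfr, h]
  have hShat_orth : Shatᵀ * Shat = 1 := sign_diag_orth fr hfr_pm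
  have hShat_symm : Shatᵀ = Shat := Matrix.diagonal_transpose fr
  have hEsE : E * Matrix.diagonal sgn * E = Matrix.diagonal d := by
    have hfun : (fun i => (Real.sqrt |d i| * sgn i) * Real.sqrt |d i|) = d := by
      funext i
      have habs : Real.sqrt |d i| * Real.sqrt |d i| = |d i| :=
        Real.mul_self_sqrt (abs_nonneg _)
      by_cases h2 : d i < 0
      · simp only [hsgn, if_pos h2]
        have h3 : Real.sqrt |d i| * -1 * Real.sqrt |d i|
            = -(Real.sqrt |d i| * Real.sqrt |d i|) := by ring
        rw [h3, habs, abs_of_neg h2, neg_neg]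
      · simp only [hsgn, if_neg h2]
        have h3 : Real.sqrt |d i| * 1 * Real.sqrt |d i|
            = Real.sqrt |d i| * Real.sqrt |d i| := by ring
        rw [h3, habs, abs_of_nonneg (not_lt.mp h2)]
    rw [hE, Matrix.diagonal_mul_diagonal, Matrix.diagonal_mul_diagonal]
    exact congrArg Matrix.diagonal hfun
  set X : Matrix (Fin r) (Fin r) ℝ := padMat r (U * E) with hX
  set Pv : Matrix (Fin r) (Fin r) ℝ := padMat r (V * E) with hPv
  set Y : Matrix (Fin r) (Fin r) ℝ := Pv * Shat with hY
  have hYt : Yᵀ = Shat * Pvᵀ := by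
    rw [hY, Matrix.transpose_mul, hShat_symm]
  have hPvt : Pvᵀ = padMat r (E * Vᵀ) := by
    rw [hPv, padMat_transpose]
    congr 1
    rw [Matrix.transpose_mul, hE, Matrix.diagonal_transpose]
  have hrw : X * Yᵀ = padMat r (U * Matrix.diagonal d * Vᵀ) := by
    rw [hYt, hPvt, hShat, shat_pad hn, hX, Matrix.mul_assoc, padMat_mul hn]
    congr 1
    rw [← hEsE]
    simp only [Matrix.mul_assoc]
  have hXX : Xᵀ * X = padMat r (E * Uᵀ * U * E) := by
    rw [hX, padMat_transpose, padMat_mul hm]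
    have h9 : (U * E)ᵀ * (U * E) = E * Uᵀ * U * E := by
      rw [Matrix.transpose_mul, hE, Matrix.diagonal_transpose, ← hE]
      simp only [Matrix.mul_assoc]
    rw [h9]
  have hPP : Pvᵀ * Pv = padMat r (E * Vᵀ * V * E) := by
    rw [hPv, padMat_transpose, padMat_mul hm]
    have h9 : (V * E)ᵀ * (V * E) = E * Vᵀ * V * E := by
      rw [Matrix.transpose_mul, hE, Matrix.diagonal_transpose, ← hE]
      simp only [Matrix.mul_assoc]
    rw [h9]
  have hYY : Yᵀ * Y = Shat * padMat r (E * Vᵀ * V * E) * Shat := by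
    rw [hY, Matrix.transpose_mul, hShat_symm, ← hPP]
    noncomm_ring
  have hNYY : N (Yᵀ * Y) = N (padMat r (E * Vᵀ * V * E)) := by
    rw [hYY]
    exact hinv Shat Shat _ hShat_orth hShat_orth
  have hagm := core_agm hsub hhom hinv X Y
  rw [hrw, hXX, hNYY] at hagm
  calc N (padMat r (U * Matrix.diagonal d * Vᵀ))
      ≤ 1 / 2 * (N (padMat r (E * Uᵀ * U * E)) + N (padMat r (E * Vᵀ * V * E))) := hagm
    _ = 1 / 2 *
        (N (padMat r (Matrix.diagonal (fun i => Real.sqrt |d i|) * Uᵀ * U *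
              Matrix.diagonal (fun i => Real.sqrt |d i|)))
          + N (padMat r (Matrix.diagonal (fun i => Real.sqrt |d i|) * Vᵀ * V *
              Matrix.diagonal (fun i => Real.sqrt |d i|)))) := by rw [hE]
end

section
/- Let f, g ∈ L¹(ℝ) ∩ L²(ℝ) with weak derivatives f', g' ∈ L²(ℝ), and let φ_{σ²}(t) = (2πσ²)^{-1/2}·exp(-t²/(2σ²)) be the Gaussian density with variance σ² > 0. Then |⟨f, g⟩_{L²} - ⟨φ_{σ²} * f, φ_{σ²} * g⟩_{L²}| ≤ σ²·‖f'‖_{L²}·‖g'‖_{L²}. -/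
open Real MeasureTheory

/-- The one-dimensional Gaussian density with variance `v`. -/
noncomputable def gauss (v : ℝ) (t : ℝ) : ℝ :=
  (Real.sqrt (2 * Real.pi * v))⁻¹ * Real.exp (-(t ^ 2) / (2 * v))

namespace Stmt5Aux

open Filter Set


lemma gauss_nonneg (v t : ℝ) : 0 ≤ gauss v t :=
  mul_nonneg (inv_nonneg.2 (Real.sqrt_nonneg _)) (Real.exp_pos _).le

lemma gauss_continuous (v : ℝ) : Continuous (gauss v) := by
  unfold gauss; fun_prop

lemma gauss_eq' {v : ℝ} (hv : 0 < v) :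
    gauss v = fun t => (Real.sqrt (2 * Real.pi * v))⁻¹ * Real.exp (-(2*v)⁻¹ * t ^ 2) := by
  funext t
  have : -(t ^ 2) / (2 * v) = -(2*v)⁻¹ * t ^ 2 := by field_simp
  rw [gauss, this]

lemma gauss_le {v : ℝ} (hv : 0 < v) (t : ℝ) : gauss v t ≤ (Real.sqrt (2 * Real.pi * v))⁻¹ := by
  have h1 : Real.exp (-(t ^ 2) / (2 * v)) ≤ 1 := by
    rw [Real.exp_le_one_iff]
    have : 0 ≤ t ^ 2 / (2 * v) := by positivity
    rw [neg_div]; linarith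
  calc gauss v t ≤ (Real.sqrt (2 * Real.pi * v))⁻¹ * 1 :=
        mul_le_mul_of_nonneg_left h1 (inv_nonneg.2 (Real.sqrt_nonneg _))
    _ = _ := mul_one _

lemma gauss_integrable {v : ℝ} (hv : 0 < v) : Integrable (gauss v) := by
  rw [gauss_eq' hv]
  exact (integrable_exp_neg_mul_sq (by positivity)).const_mul _

lemma gauss_eq_pdf {v : ℝ} (hv : 0 < v) :
    gauss v = ProbabilityTheory.gaussianPDFReal 0 ⟨v, hv.le⟩ := by
  funext t
  simp [gauss, ProbabilityTheory.gaussianPDFReal, neg_div, NNReal.coe_mk]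
  rfl

lemma gauss_integral {v : ℝ} (hv : 0 < v) : ∫ t, gauss v t = 1 := by
  rw [gauss_eq_pdf hv]
  exact ProbabilityTheory.integral_gaussianPDFReal_eq_one 0 (by
    intro h
    exact hv.ne' (congrArg NNReal.toReal h))

lemma gauss_even {v t : ℝ} : gauss v (-t) = gauss v t := by simp [gauss]




lemma tendsto_mul_exp_atTop {b : ℝ} (hb : 0 < b) :
    Filter.Tendsto (fun x : ℝ => x * rexp (-b * x ^ 2)) Filter.atTop (nhds 0) := by
  have h := rpow_mul_exp_neg_mul_sq_isLittleO_exp_neg hb 1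
  have h2 : Filter.Tendsto (fun x : ℝ => rexp (-(1/2) * x)) Filter.atTop (nhds 0) := by
    apply Real.tendsto_exp_comp_nhds_zero.2
    apply Filter.Tendsto.const_mul_atTop_of_neg (by norm_num : (-(1/2):ℝ) < 0) Filter.tendsto_id
  have h3 := h.isBigO.trans_tendsto h2
  apply h3.congr'
  filter_upwards [Filter.eventually_ge_atTop (0:ℝ)] with x hx
  rw [show x ^ (1:ℝ) = x by rw [Real.rpow_one]]

lemma integrable_sq_mul_exp {b : ℝ} (hb : 0 < b) :
    Integrable (fun x : ℝ => x ^ 2 * rexp (-b * x ^ 2)) := by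
  have h := integrable_rpow_mul_exp_neg_mul_sq hb (by norm_num : (-1:ℝ) < 2)
  have : (fun x : ℝ => x ^ (2:ℝ) * rexp (-b * x ^ 2))
      = fun x : ℝ => x ^ 2 * rexp (-b * x ^ 2) := by
    funext x
    rw [show (2:ℝ) = ((2:ℕ):ℝ) by norm_num, Real.rpow_natCast]
  rwa [this] at h

lemma integral_sq_mul_exp {b : ℝ} (hb : 0 < b) :
    ∫ x : ℝ, x ^ 2 * rexp (-b * x ^ 2) = (2*b)⁻¹ * Real.sqrt (π / b) := by
  set A : ℝ → ℝ := fun x => -(2*b)⁻¹ * x * rexp (-b * x^2) with hA_def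
  set A' : ℝ → ℝ := fun x => x^2 * rexp (-b*x^2) - (2*b)⁻¹ * rexp (-b*x^2) with hA'_def
  have hA : ∀ x : ℝ, HasDerivAt A (A' x) x := by
    intro x
    have h1 : HasDerivAt (fun x : ℝ => -b * x^2) (-b * (2*x)) x := by
      simpa using ((hasDerivAt_pow 2 x).const_mul (-b))
    have h2 := h1.exp
    have h3 : HasDerivAt A
        (-(2*b)⁻¹ * 1 * rexp (-b * x ^ 2) + -(2*b)⁻¹ * id x * (rexp (-b * x ^ 2) * (-b * (2 * x)))) x :=
      ((hasDerivAt_id x).const_mul (-(2*b)⁻¹)).mul h2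
    convert h3 using 1
    simp only [hA'_def, id_eq]
    field_simp
    ring
  have hi2 : Integrable (fun x : ℝ => rexp (-b * x ^ 2)) := integrable_exp_neg_mul_sq hb
  have hderint : Integrable A' := (integrable_sq_mul_exp hb).sub (hi2.const_mul _)
  have hAc : Continuous A := by
    apply Continuous.mul (by fun_prop)
    exact (continuous_const.mul (continuous_pow 2)).rexp
  have hT : Tendsto A atTop (nhds 0) := by
    have h0 := (tendsto_mul_exp_atTop hb).const_mul (-(2*b)⁻¹)
    rw [mul_zero] at h0
    exact h0.congr (fun x => by simp only [hA_def]; ring)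
  have hB : Tendsto A atBot (nhds 0) := by
    have h1 : Tendsto (fun x : ℝ => A (-x)) atTop (nhds 0) := by
      have h0 := (tendsto_mul_exp_atTop hb).const_mul ((2*b)⁻¹)
      rw [mul_zero] at h0
      exact h0.congr (fun x => by simp only [hA_def, neg_sq, mul_neg, neg_neg, neg_mul]; ring)
    have h2 := h1.comp tendsto_neg_atBot_atTop
    exact h2.congr (fun x => by simp [Function.comp])
  have hIoi : ∫ x in Set.Ioi (0:ℝ), A' x = 0 - A 0 :=
    integral_Ioi_of_hasDerivAt_of_tendsto hAc.continuousWithinAt (fun x _ => hA x)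
      hderint.integrableOn hT
  have hIic : ∫ x in Set.Iic (0:ℝ), A' x = A 0 - 0 :=
    integral_Iic_of_hasDerivAt_of_tendsto hAc.continuousWithinAt (fun x _ => hA x)
      hderint.integrableOn hB
  have htot : ∫ x, A' x = 0 := by
    rw [← intervalIntegral.integral_Iic_add_Ioi hderint.integrableOn hderint.integrableOn, hIoi, hIic]
    ring
  have hsplit : ∫ x, A' x = (∫ x : ℝ, x ^ 2 * rexp (-b * x ^ 2)) - (2*b)⁻¹ * ∫ x : ℝ, rexp (-b * x ^ 2) := by
    rw [hA'_def]
    rw [integral_sub (integrable_sq_mul_exp hb) (hi2.const_mul _), MeasureTheory.integral_const_mul]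
  rw [hsplit, integral_gaussian] at htot
  linarith




lemma integrable_sq_mul_gauss {v : ℝ} (hv : 0 < v) :
    Integrable (fun t : ℝ => t ^ 2 * gauss v t) := by
  rw [gauss_eq' hv]
  have h := (integrable_sq_mul_exp (b := (2*v)⁻¹) (by positivity)).const_mul
    ((Real.sqrt (2 * Real.pi * v))⁻¹)
  exact h.congr (ae_of_all _ (fun x => by ring))

lemma integrable_id_mul_gauss {v : ℝ} (hv : 0 < v) :
    Integrable (fun t : ℝ => t * gauss v t) := by
  rw [gauss_eq' hv]
  have h := (integrable_mul_exp_neg_mul_sq (b := (2*v)⁻¹) (by positivity)).const_mul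
    ((Real.sqrt (2 * Real.pi * v))⁻¹)
  exact h.congr (ae_of_all _ (fun x => by ring))

lemma gauss_moment1 {v : ℝ} (hv : 0 < v) : ∫ t : ℝ, t * gauss v t = 0 := by
  have h := integral_neg_eq_self (fun t : ℝ => t * gauss v t) volume
  have h2 : ∫ t : ℝ, (-t) * gauss v (-t) = - ∫ t : ℝ, t * gauss v t := by
    rw [← integral_neg]
    congr 1; funext t; simp [gauss, neg_mul]
  rw [h2] at h
  linarith

lemma gauss_moment2 {v : ℝ} (hv : 0 < v) : ∫ t : ℝ, t ^ 2 * gauss v t = v := by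
  rw [gauss_eq' hv]
  have hb : (0:ℝ) < (2*v)⁻¹ := by positivity
  have : ∫ t : ℝ, t ^ 2 * ((Real.sqrt (2 * Real.pi * v))⁻¹ * rexp (-(2*v)⁻¹ * t ^ 2))
      = (Real.sqrt (2 * Real.pi * v))⁻¹ * ∫ t : ℝ, t ^ 2 * rexp (-(2*v)⁻¹ * t ^ 2) := by
    rw [← MeasureTheory.integral_const_mul]
    congr 1; funext t; ring
  rw [this, integral_sq_mul_exp hb]
  have h1 : (2 * (2*v)⁻¹)⁻¹ = v := by field_simp
  have h2 : π / (2*v)⁻¹ = 2 * π * v := by field_simp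
  rw [h1, h2]
  have h3 : Real.sqrt (2 * π * v) ≠ 0 := by positivity
  field_simp



lemma rpow_two' (x : ℝ) : x ^ (2:ℝ) = x ^ 2 := by
  rw [show (2:ℝ) = ((2:ℕ):ℝ) by norm_num, Real.rpow_natCast]

lemma two_conj : Real.HolderConjugate 2 2 := Real.HolderConjugate.two_two

lemma ofReal_two : ENNReal.ofReal (2:ℝ) = 2 := by norm_num

/-- L² Cauchy–Schwarz for real functions. -/
lemma l2_cs {μ : Measure ℝ} {F G : ℝ → ℝ} (hF : MemLp F 2 μ) (hG : MemLp G 2 μ) :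
    |∫ x, F x * G x ∂μ| ≤ Real.sqrt (∫ x, F x ^ 2 ∂μ) * Real.sqrt (∫ x, G x ^ 2 ∂μ) := by
  have hF' : MemLp F (ENNReal.ofReal 2) μ := by rwa [ofReal_two]
  have hG' : MemLp G (ENNReal.ofReal 2) μ := by rwa [ofReal_two]
  have h := integral_mul_norm_le_Lp_mul_Lq two_conj hF' hG'
  have h1 : |∫ x, F x * G x ∂μ| ≤ ∫ x, ‖F x‖ * ‖G x‖ ∂μ := by
    calc |∫ x, F x * G x ∂μ| = ‖∫ x, F x * G x ∂μ‖ := (Real.norm_eq_abs _).symm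
      _ ≤ ∫ x, ‖F x * G x‖ ∂μ := norm_integral_le_integral_norm _
      _ = ∫ x, ‖F x‖ * ‖G x‖ ∂μ := by congr 1; funext x; exact norm_mul _ _
  have e1 : ∫ x, ‖F x‖ ^ (2:ℝ) ∂μ = ∫ x, F x ^ 2 ∂μ := by
    congr 1; funext x; rw [rpow_two', Real.norm_eq_abs, sq_abs]
  have e2 : ∫ x, ‖G x‖ ^ (2:ℝ) ∂μ = ∫ x, G x ^ 2 ∂μ := by
    congr 1; funext x; rw [rpow_two', Real.norm_eq_abs, sq_abs]
  rw [e1, e2] at h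
  refine h1.trans (h.trans ?_)
  have i1 : 0 ≤ ∫ x, F x ^ 2 ∂μ := integral_nonneg (fun x => sq_nonneg _)
  have i2 : 0 ≤ ∫ x, G x ^ 2 ∂μ := integral_nonneg (fun x => sq_nonneg _)
  rw [Real.sqrt_eq_rpow, Real.sqrt_eq_rpow]

/-- On a finite measure, `(∫ h)² ≤ μ(univ) * ∫ h²`. -/
lemma sq_integral_le {μ : Measure ℝ} [IsFiniteMeasure μ] {h : ℝ → ℝ} (hh : MemLp h 2 μ) :
    (∫ t, h t ∂μ) ^ 2 ≤ (μ Set.univ).toReal * ∫ t, h t ^ 2 ∂μ := by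
  have hone : MemLp (fun _ : ℝ => (1:ℝ)) 2 μ := memLp_const 1
  have h1 := l2_cs hh hone
  simp only [mul_one, one_pow] at h1
  have h2 : ∫ _t, (1:ℝ) ∂μ = (μ Set.univ).toReal := by simp [Measure.real]
  rw [h2] at h1
  have i1 : 0 ≤ ∫ t, h t ^ 2 ∂μ := integral_nonneg (fun x => sq_nonneg _)
  calc (∫ t, h t ∂μ) ^ 2 = |∫ t, h t ∂μ| ^ 2 := (sq_abs _).symm
    _ ≤ (Real.sqrt (∫ t, h t ^ 2 ∂μ) * Real.sqrt ((μ Set.univ).toReal)) ^ 2 := by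
        apply pow_le_pow_left₀ (abs_nonneg _) h1
    _ = (μ Set.univ).toReal * ∫ t, h t ^ 2 ∂μ := by
        rw [mul_pow, Real.sq_sqrt i1, Real.sq_sqrt ENNReal.toReal_nonneg]; ring

lemma integrable_mul_L2 {F G : ℝ → ℝ} (hF : MemLp F 2 (volume : Measure ℝ))
    (hG : MemLp G 2 (volume : Measure ℝ)) : Integrable (fun x => F x * G x) := by
  have h := hG.smul (φ := F) hF (r := 1) (hpqr := ⟨by simp [ENNReal.inv_two_add_inv_two]⟩)
  rw [smul_eq_mul] at h
  exact memLp_one_iff_integrable.1 h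

lemma memL2_shift {F : ℝ → ℝ} (hF : MemLp F 2 (volume : Measure ℝ)) (y : ℝ) :
    MemLp (fun x => F (x - y)) 2 (volume : Measure ℝ) :=
  hF.comp_measurePreserving (measurePreserving_sub_right volume y)




lemma sq_diff_integral_le_of_nonneg {F F' : ℝ → ℝ} (hFm : Measurable F')
    (hFd : ∀ x, HasDerivAt F (F' x) x) (hF' : MemLp F' 2 (volume : Measure ℝ))
    {y : ℝ} (hy : 0 ≤ y) :
    ∫ x, (F x - F (x - y)) ^ 2 ≤ y ^ 2 * ∫ t, F' t ^ 2 := by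
  have hFc : Continuous F := continuous_iff_continuousAt.2 fun x => (hFd x).continuousAt
  have hsq : Integrable (fun t => F' t ^ 2) := by
    exact (integrable_mul_L2 hF' hF').congr (ae_of_all _ fun t => (pow_two (F' t)).symm)
  -- interval integrability of F'
  have hii : ∀ a b : ℝ, IntervalIntegrable F' volume a b := by
    intro a b
    rw [intervalIntegrable_iff]
    haveI : IsFiniteMeasure (volume.restrict (Set.uIoc a b)) := by
      constructor
      rw [Measure.restrict_apply_univ]
      rw [Set.uIoc, Real.volume_Ioc]
      exact ENNReal.ofReal_lt_top
    exact (hF'.restrict _).integrable one_le_two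
  -- FTC
  have hftc : ∀ x : ℝ, F x - F (x - y) = ∫ t in (x - y)..x, F' t := fun x =>
    (intervalIntegral.integral_eq_sub_of_hasDerivAt (fun t _ => hFd t) (hii _ _)).symm
  -- pointwise bound
  have key : ∀ x : ℝ, (F x - F (x - y)) ^ 2 ≤ y * ∫ t in Set.Ioc (x - y) x, F' t ^ 2 := by
    intro x
    rw [hftc x, intervalIntegral.integral_of_le (by linarith : x - y ≤ x)]
    haveI : IsFiniteMeasure (volume.restrict (Set.Ioc (x - y) x)) := by
      constructor
      rw [Measure.restrict_apply_univ]
      exact (Real.volume_Ioc (a := x - y) (b := x)) ▸ ENNReal.ofReal_lt_top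
    have h := sq_integral_le (hF'.restrict (Set.Ioc (x - y) x))
    rw [Measure.restrict_apply_univ, Real.volume_Ioc] at h
    have : (ENNReal.ofReal (x - (x - y))).toReal = y := by
      rw [ENNReal.toReal_ofReal (by linarith)]; ring
    rwa [this] at h
  -- lintegral setup
  set e : ℝ → ENNReal := fun t => ENNReal.ofReal (F' t ^ 2) with he_def
  have he_meas : Measurable e := (hFm.pow_const 2).ennreal_ofReal
  have hE_fin : ∫⁻ t, e t ≠ ⊤ := by
    have h1 : ∫⁻ t, e t = ∫⁻ t, ‖F' t ^ 2‖ₑ ∂volume := by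
      apply lintegral_congr; intro t
      show ENNReal.ofReal (F' t ^ 2) = _
      exact (Real.enorm_eq_ofReal (sq_nonneg _)).symm
    rw [h1]
    exact hsq.2.ne
  have hE_int : ∫ t, F' t ^ 2 = (∫⁻ t, e t).toReal := by
    rw [integral_eq_lintegral_of_nonneg_ae (ae_of_all _ fun t => sq_nonneg _)
      (hsq.aestronglyMeasurable)]
  have hinner : ∀ x : ℝ, ENNReal.ofReal (∫ t in Set.Ioc (x - y) x, F' t ^ 2)
      = ∫⁻ t in Set.Ioc (x - y) x, e t := by
    intro x
    rw [he_def, ofReal_integral_eq_lintegral_ofReal hsq.integrableOn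
      (ae_of_all _ fun t => sq_nonneg _)]
  -- the lintegral of Δ²
  have hΔmeas : AEStronglyMeasurable (fun x => (F x - F (x - y)) ^ 2) (volume : Measure ℝ) := by
    apply Continuous.aestronglyMeasurable
    exact ((hFc.sub (hFc.comp (continuous_id.sub continuous_const))).pow 2)
  have step0 : ∫ x, (F x - F (x - y)) ^ 2
      = (∫⁻ x, ENNReal.ofReal ((F x - F (x - y)) ^ 2)).toReal := by
    rw [integral_eq_lintegral_of_nonneg_ae (ae_of_all _ fun x => sq_nonneg _) hΔmeas]
  -- swap computation
  have hswap : ∫⁻ x, ∫⁻ t in Set.Ioc (x - y) x, e t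
      = ENNReal.ofReal y * ∫⁻ t, e t := by
    have h1 : ∀ x : ℝ, ∫⁻ t in Set.Ioc (x - y) x, e t
        = ∫⁻ t, (Set.Ioc (x - y) x).indicator e t := by
      intro x; rw [lintegral_indicator measurableSet_Ioc]
    simp_rw [h1]
    have hS : MeasurableSet {p : ℝ × ℝ | p.1 - y < p.2 ∧ p.2 ≤ p.1} := by
      apply MeasurableSet.inter
      · exact measurableSet_lt (measurable_fst.sub measurable_const) measurable_snd
      · exact measurableSet_le measurable_snd measurable_fst
    have hu_meas : AEMeasurable (Function.uncurry fun x t => (Set.Ioc (x - y) x).indicator e t)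
        ((volume : Measure ℝ).prod (volume : Measure ℝ)) := by
      have : (Function.uncurry fun x t => (Set.Ioc (x - y) x).indicator e t)
          = Set.indicator {p : ℝ × ℝ | p.1 - y < p.2 ∧ p.2 ≤ p.1} (fun p => e p.2) := by
        funext p
        rcases p with ⟨x, t⟩
        simp only [Function.uncurry, Set.indicator, Set.mem_Ioc, Set.mem_setOf_eq]
      rw [this]
      exact ((he_meas.comp measurable_snd).indicator hS).aemeasurable
    rw [lintegral_lintegral_swap hu_meas]
    have h2 : ∀ t : ℝ, ∫⁻ x, (Set.Ioc (x - y) x).indicator e t = e t * ENNReal.ofReal y := by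
      intro t
      have h3 : (fun x => (Set.Ioc (x - y) x).indicator e t)
          = (Set.Ico t (t + y)).indicator (fun _ => e t) := by
        funext x
        simp only [Set.indicator, Set.mem_Ioc, Set.mem_Ico]
        by_cases hx : x - y < t ∧ t ≤ x
        · rw [if_pos hx, if_pos ⟨hx.2, by linarith [hx.1]⟩]
        · rw [if_neg hx, if_neg ?_]
          intro hx2
          exact hx ⟨by linarith [hx2.2], hx2.1⟩
      rw [h3, lintegral_indicator_const measurableSet_Ico, Real.volume_Ico]
      congr 1
      ring_nf
    simp_rw [h2]
    rw [lintegral_mul_const' _ _ ENNReal.ofReal_ne_top, mul_comm]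
  -- put together
  have main : ∫⁻ x, ENNReal.ofReal ((F x - F (x - y)) ^ 2)
      ≤ ENNReal.ofReal y * (ENNReal.ofReal y * ∫⁻ t, e t) := by
    calc ∫⁻ x, ENNReal.ofReal ((F x - F (x - y)) ^ 2)
        ≤ ∫⁻ x, ENNReal.ofReal (y * ∫ t in Set.Ioc (x - y) x, F' t ^ 2) :=
          lintegral_mono fun x => ENNReal.ofReal_le_ofReal (key x)
      _ = ∫⁻ x, ENNReal.ofReal y * ∫⁻ t in Set.Ioc (x - y) x, e t := by
          apply lintegral_congr; intro x
          rw [ENNReal.ofReal_mul hy, hinner x]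
      _ = ENNReal.ofReal y * ∫⁻ x, ∫⁻ t in Set.Ioc (x - y) x, e t :=
          lintegral_const_mul' _ _ ENNReal.ofReal_ne_top
      _ = ENNReal.ofReal y * (ENNReal.ofReal y * ∫⁻ t, e t) := by rw [hswap]
  have hRHS_fin : ENNReal.ofReal y * (ENNReal.ofReal y * ∫⁻ t, e t) ≠ ⊤ :=
    ENNReal.mul_ne_top ENNReal.ofReal_ne_top (ENNReal.mul_ne_top ENNReal.ofReal_ne_top hE_fin)
  rw [step0, hE_int]
  calc (∫⁻ x, ENNReal.ofReal ((F x - F (x - y)) ^ 2)).toReal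
      ≤ (ENNReal.ofReal y * (ENNReal.ofReal y * ∫⁻ t, e t)).toReal :=
        ENNReal.toReal_mono hRHS_fin main
    _ = y ^ 2 * (∫⁻ t, e t).toReal := by
        rw [ENNReal.toReal_mul, ENNReal.toReal_mul, ENNReal.toReal_ofReal hy]
        ring

lemma sq_diff_integral_le {F F' : ℝ → ℝ} (hFm : Measurable F')
    (hFd : ∀ x, HasDerivAt F (F' x) x) (hF' : MemLp F' 2 (volume : Measure ℝ)) (y : ℝ) :
    ∫ x, (F x - F (x - y)) ^ 2 ≤ y ^ 2 * ∫ t, F' t ^ 2 := by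
  rcases le_or_gt 0 y with hy | hy
  · exact sq_diff_integral_le_of_nonneg hFm hFd hF' hy
  · have h1 : ∫ x, (F x - F (x - y)) ^ 2 = ∫ x, (F x - F (x - (-y))) ^ 2 := by
      rw [← integral_sub_right_eq_self (fun x => (F x - F (x - y)) ^ 2) (-y)]
      apply integral_congr_ae
      apply ae_of_all
      intro x
      have : x - -y - y = x := by ring
      simp only [this]
      ring_nf
    rw [h1]
    have h2 := sq_diff_integral_le_of_nonneg hFm hFd hF' (by linarith : (0:ℝ) ≤ -y)
    calc ∫ x, (F x - F (x - (-y))) ^ 2 ≤ (-y) ^ 2 * ∫ t, F' t ^ 2 := h2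
      _ = y ^ 2 * ∫ t, F' t ^ 2 := by ring_nf




lemma J_eq {f g : ℝ → ℝ} (hf2 : MemLp f 2 (volume : Measure ℝ))
    (hg2 : MemLp g 2 (volume : Measure ℝ)) (y : ℝ) :
    ∫ x, (f x - f (x - y)) * (g x - g (x - y))
      = 2 * (∫ x, f x * g x) - (∫ x, f x * g (x - y)) - (∫ x, f x * g (x - (-y))) := by
  have i1 := integrable_mul_L2 hf2 hg2
  have i2 := integrable_mul_L2 hf2 (memL2_shift hg2 y)
  have i3 := integrable_mul_L2 (memL2_shift hf2 y) hg2
  have i4 := integrable_mul_L2 (memL2_shift hf2 y) (memL2_shift hg2 y)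
  have e : (fun x => (f x - f (x - y)) * (g x - g (x - y)))
      = fun x => f x * g x - f x * g (x - y) - f (x - y) * g x + f (x - y) * g (x - y) := by
    funext x; ring
  have i12 : Integrable (fun x => f x * g x - f x * g (x - y)) volume := i1.sub i2
  have i123 : Integrable (fun x => f x * g x - f x * g (x - y) - f (x - y) * g x) volume :=
    i12.sub i3
  rw [e, integral_add i123 i4, integral_sub i12 i3, integral_sub i1 i2]
  have e4 : ∫ x, f (x - y) * g (x - y) = ∫ x, f x * g x :=
    integral_sub_right_eq_self (μ := volume) (fun x => f x * g x) y
  have e3 : ∫ x, f (x - y) * g x = ∫ x, f x * g (x - (-y)) := by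
    have h := integral_sub_right_eq_self (μ := volume) (fun x => f x * g (x - (-y))) y
    rw [← h]
    apply integral_congr_ae
    apply ae_of_all
    intro x
    show f (x - y) * g x = f (x - y) * g (x - y - -y)
    have hx : x - y - -y = x := by ring
    rw [hx]
  rw [e4, e3]
  ring

lemma J_bound {f f' g g' : ℝ → ℝ}
    (hf'm : Measurable f') (hfd : ∀ x, HasDerivAt f (f' x) x)
    (hf2 : MemLp f 2 (volume : Measure ℝ)) (hf'2 : MemLp f' 2 (volume : Measure ℝ))
    (hg'm : Measurable g') (hgd : ∀ x, HasDerivAt g (g' x) x)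
    (hg2 : MemLp g 2 (volume : Measure ℝ)) (hg'2 : MemLp g' 2 (volume : Measure ℝ))
    (y : ℝ) :
    |∫ x, (f x - f (x - y)) * (g x - g (x - y))|
      ≤ y ^ 2 * (Real.sqrt (∫ t, f' t ^ 2) * Real.sqrt (∫ t, g' t ^ 2)) := by
  have h := l2_cs (hf2.sub (memL2_shift hf2 y)) (hg2.sub (memL2_shift hg2 y))
  refine h.trans ?_
  have hf_le : Real.sqrt (∫ x, (f x - f (x - y)) ^ 2) ≤ |y| * Real.sqrt (∫ t, f' t ^ 2) := by
    calc Real.sqrt (∫ x, (f x - f (x - y)) ^ 2)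
        ≤ Real.sqrt (y ^ 2 * ∫ t, f' t ^ 2) :=
          Real.sqrt_le_sqrt (sq_diff_integral_le hf'm hfd hf'2 y)
      _ = |y| * Real.sqrt (∫ t, f' t ^ 2) := by
          rw [Real.sqrt_mul (sq_nonneg y), Real.sqrt_sq_eq_abs]
  have hg_le : Real.sqrt (∫ x, (g x - g (x - y)) ^ 2) ≤ |y| * Real.sqrt (∫ t, g' t ^ 2) := by
    calc Real.sqrt (∫ x, (g x - g (x - y)) ^ 2)
        ≤ Real.sqrt (y ^ 2 * ∫ t, g' t ^ 2) :=
          Real.sqrt_le_sqrt (sq_diff_integral_le hg'm hgd hg'2 y)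
      _ = |y| * Real.sqrt (∫ t, g' t ^ 2) := by
          rw [Real.sqrt_mul (sq_nonneg y), Real.sqrt_sq_eq_abs]
  calc Real.sqrt (∫ x, (f x - f (x - y)) ^ 2) * Real.sqrt (∫ x, (g x - g (x - y)) ^ 2)
      ≤ (|y| * Real.sqrt (∫ t, f' t ^ 2)) * (|y| * Real.sqrt (∫ t, g' t ^ 2)) := by
        apply mul_le_mul hf_le hg_le (Real.sqrt_nonneg _) (by positivity)
    _ = y ^ 2 * (Real.sqrt (∫ t, f' t ^ 2) * Real.sqrt (∫ t, g' t ^ 2)) := by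
        rw [← sq_abs y]; ring

lemma eLpNorm_toReal_eq_sqrt {F : ℝ → ℝ} (hF : MemLp F 2 (volume : Measure ℝ)) :
    (eLpNorm F 2 volume).toReal = Real.sqrt (∫ t, F t ^ 2) := by
  rw [hF.eLpNorm_eq_integral_rpow_norm two_ne_zero ENNReal.ofNat_ne_top]
  have h2 : ((2:ENNReal)).toReal = (2:ℝ) := by norm_num
  rw [h2]
  have he : ∫ a, ‖F a‖ ^ (2:ℝ) = ∫ t, F t ^ 2 := by
    congr 1; funext a
    rw [show (2:ℝ) = ((2:ℕ):ℝ) by norm_num, Real.rpow_natCast, Real.norm_eq_abs, sq_abs]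
  rw [he]
  rw [ENNReal.toReal_ofReal (Real.rpow_nonneg (integral_nonneg fun t => sq_nonneg _) _)]
  rw [Real.sqrt_eq_rpow, one_div]


end Stmt5Aux

open Stmt5Aux in
/-- Let `f, g ∈ L¹(ℝ) ∩ L²(ℝ)` with derivatives `f', g' ∈ L²(ℝ)`, and let
`φ_{σ²}` be the Gaussian density with variance `σ² > 0`.  Then
`|⟨f,g⟩_{L²} - ⟨φ_{σ²}*f, φ_{σ²}*g⟩_{L²}| ≤ σ²·‖f'‖_{L²}·‖g'‖_{L²}`. -/
theorem stmt5 (σ : ℝ) (hσ : 0 < σ) (f g f' g' : ℝ → ℝ)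
    (hf1 : Integrable f) (hf2 : MemLp f 2 (volume : Measure ℝ))
    (hg1 : Integrable g) (hg2 : MemLp g 2 (volume : Measure ℝ))
    (hfd : ∀ x, HasDerivAt f (f' x) x) (hgd : ∀ x, HasDerivAt g (g' x) x)
    (hf'2 : MemLp f' 2 (volume : Measure ℝ))
    (hg'2 : MemLp g' 2 (volume : Measure ℝ)) :
    |(∫ x : ℝ, f x * g x)
        - ∫ x : ℝ, (∫ y : ℝ, gauss (σ ^ 2) y * f (x - y))
            * (∫ y : ℝ, gauss (σ ^ 2) y * g (x - y))|
      ≤ σ ^ 2 * (eLpNorm f' 2 volume).toReal * (eLpNorm g' 2 volume).toReal := by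
  have hv : (0:ℝ) < σ ^ 2 := by positivity
  have hfc : Continuous f := continuous_iff_continuousAt.2 fun x => (hfd x).continuousAt
  have hgc : Continuous g := continuous_iff_continuousAt.2 fun x => (hgd x).continuousAt
  have hf'm : Measurable f' := by
    have h : f' = deriv f := funext fun x => ((hfd x).deriv).symm
    rw [h]; exact measurable_deriv f
  have hg'm : Measurable g' := by
    have h : g' = deriv g := funext fun x => ((hgd x).deriv).symm
    rw [h]; exact measurable_deriv g
  set φ : ℝ → ℝ := gauss (σ ^ 2) with hφ_def
  have hφc : Continuous φ := gauss_continuous _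
  have hφint : Integrable φ := gauss_integrable hv
  have hφ1 : ∫ t, φ t = 1 := gauss_integral hv
  have hφnn : ∀ t, 0 ≤ φ t := gauss_nonneg _
  set C : ℝ := (Real.sqrt (2 * Real.pi * σ ^ 2))⁻¹ with hC_def
  have hφle : ∀ t, φ t ≤ C := gauss_le hv
  have hCnn : 0 ≤ C := inv_nonneg.2 (Real.sqrt_nonneg _)
  set B : ℝ := Real.sqrt (∫ t, f' t ^ 2) * Real.sqrt (∫ t, g' t ^ 2) with hB_def
  have hBnn : 0 ≤ B := mul_nonneg (Real.sqrt_nonneg _) (Real.sqrt_nonneg _)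
  set L : ℝ := ∫ x, f x * g x with hL_def
  set M : ℝ → ℝ := fun y => ∫ x, f x * g (x - y) with hM_def
  set F : ℝ → ℝ × ℝ → ℝ := fun x z => (φ z.1 * f (x - z.1)) * (φ z.2 * g (x - z.2)) with hF_def
  set P : ℝ × ℝ → ℝ := fun z => φ z.1 * φ z.2 with hP_def
  -- measurability of uncurry F
  have hm : AEStronglyMeasurable (Function.uncurry F)
      ((volume : Measure ℝ).prod ((volume : Measure ℝ).prod (volume : Measure ℝ))) := by
    apply Continuous.aestronglyMeasurable
    show Continuous fun p : ℝ × (ℝ × ℝ) =>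
      (φ p.2.1 * f (p.1 - p.2.1)) * (φ p.2.2 * g (p.1 - p.2.2))
    have c21 : Continuous fun p : ℝ × (ℝ × ℝ) => p.2.1 := continuous_fst.comp continuous_snd
    have c22 : Continuous fun p : ℝ × (ℝ × ℝ) => p.2.2 := continuous_snd.comp continuous_snd
    exact ((hφc.comp c21).mul (hfc.comp (continuous_fst.sub c21))).mul
      ((hφc.comp c22).mul (hgc.comp (continuous_fst.sub c22)))
  -- slices
  have hf_slice : ∀ x : ℝ, Integrable (fun u => φ u * f (x - u)) := fun x =>
    (hf1.comp_sub_left x).bdd_mul hφc.aestronglyMeasurable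
      (c := C) (ae_of_all _ fun u => by rw [Real.norm_eq_abs, abs_of_nonneg (hφnn u)]; exact hφle u)
  have hg_slice : ∀ x : ℝ, Integrable (fun v => φ v * g (x - v)) := fun x =>
    (hg1.comp_sub_left x).bdd_mul hφc.aestronglyMeasurable
      (c := C) (ae_of_all _ fun u => by rw [Real.norm_eq_abs, abs_of_nonneg (hφnn u)]; exact hφle u)
  have hfabs_slice : ∀ x : ℝ, Integrable (fun u => φ u * |f (x - u)|) := fun x =>
    (hf1.comp_sub_left x).abs.bdd_mul hφc.aestronglyMeasurable
      (c := C) (ae_of_all _ fun u => by rw [Real.norm_eq_abs, abs_of_nonneg (hφnn u)]; exact hφle u)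
  have hgabs_slice : ∀ x : ℝ, Integrable (fun v => φ v * |g (x - v)|) := fun x =>
    (hg1.comp_sub_left x).abs.bdd_mul hφc.aestronglyMeasurable
      (c := C) (ae_of_all _ fun u => by rw [Real.norm_eq_abs, abs_of_nonneg (hφnn u)]; exact hφle u)
  have hslice : ∀ x : ℝ, Integrable (F x) ((volume : Measure ℝ).prod volume) := fun x =>
    (hf_slice x).mul_prod (hg_slice x)
  -- norm integrals
  have hnorm_eq : ∀ x : ℝ, (∫ z, ‖F x z‖ ∂((volume : Measure ℝ).prod volume))
      = (∫ u, φ u * |f (x - u)|) * (∫ v, φ v * |g (x - v)|) := by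
    intro x
    rw [← integral_prod_mul (fun u => φ u * |f (x - u)|) (fun v => φ v * |g (x - v)|)]
    apply integral_congr_ae
    apply ae_of_all
    intro z
    show ‖(φ z.1 * f (x - z.1)) * (φ z.2 * g (x - z.2))‖ = _
    rw [norm_mul, Real.norm_eq_abs, Real.norm_eq_abs, abs_mul, abs_mul,
      abs_of_nonneg (hφnn z.1), abs_of_nonneg (hφnn z.2)]
  have hconv : Integrable (fun x => ∫ u, φ u * |f (x - u)|) := by
    have h := hφint.integrable_convolution (ContinuousLinearMap.mul ℝ ℝ) hf1.abs
    apply h.congr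
    apply ae_of_all
    intro x
    simp [convolution_def, ContinuousLinearMap.mul_apply']
  set Kg : ℝ := C * ∫ x, |g x| with hKg_def
  have hKg_bound : ∀ x : ℝ, (∫ v, φ v * |g (x - v)|) ≤ Kg := by
    intro x
    have h1 : (∫ v, φ v * |g (x - v)|) ≤ ∫ v, C * |g (x - v)| := by
      apply integral_mono (hgabs_slice x) ((hg1.comp_sub_left x).abs.const_mul C)
      intro v
      exact mul_le_mul_of_nonneg_right (hφle v) (abs_nonneg _)
    have h2 : ∫ v, C * |g (x - v)| = Kg := by
      rw [MeasureTheory.integral_const_mul]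
      congr 1
      exact integral_sub_left_eq_self (fun t => |g t|) volume x
    linarith
  have hnormint : Integrable
      (fun x => ∫ z, ‖Function.uncurry F (x, z)‖ ∂((volume : Measure ℝ).prod volume)) := by
    have hdom : Integrable (fun x => (∫ u, φ u * |f (x - u)|) * Kg) := hconv.mul_const Kg
    apply Integrable.mono' hdom (hm.norm.integral_prod_right')
    apply ae_of_all
    intro x
    have hnn : 0 ≤ ∫ z, ‖Function.uncurry F (x, z)‖ ∂((volume : Measure ℝ).prod volume) :=
      integral_nonneg fun z => norm_nonneg _
    rw [Real.norm_eq_abs, abs_of_nonneg hnn]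
    have : (∫ z, ‖Function.uncurry F (x, z)‖ ∂((volume : Measure ℝ).prod volume))
        = (∫ u, φ u * |f (x - u)|) * (∫ v, φ v * |g (x - v)|) := hnorm_eq x
    rw [this]
    apply mul_le_mul_of_nonneg_left (hKg_bound x)
    exact integral_nonneg fun u => mul_nonneg (hφnn u) (abs_nonneg _)
  have hFint : Integrable (Function.uncurry F)
      ((volume : Measure ℝ).prod ((volume : Measure ℝ).prod volume)) := by
    rw [integrable_prod_iff hm]
    exact ⟨ae_of_all _ hslice, hnormint⟩
  -- the swap
  have hswap := integral_integral_swap (f := F) hFint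
  have hx_eq : ∀ x : ℝ, (∫ z, F x z ∂((volume : Measure ℝ).prod volume))
      = (∫ u, φ u * f (x - u)) * (∫ v, φ v * g (x - v)) :=
    fun x => integral_prod_mul (fun u => φ u * f (x - u)) (fun v => φ v * g (x - v))
  have hz_eq : ∀ z : ℝ × ℝ, (∫ x, F x z) = P z * M (z.2 - z.1) := by
    intro z
    have h1 : (fun x => F x z) = fun x => (φ z.1 * φ z.2) * (f (x - z.1) * g (x - z.2)) := by
      funext x; show (φ z.1 * f (x - z.1)) * (φ z.2 * g (x - z.2)) = _; ring
    rw [h1, MeasureTheory.integral_const_mul]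
    congr 1
    have h2 := integral_sub_right_eq_self (μ := volume)
      (fun x => f x * g (x - (z.2 - z.1))) z.1
    simp only [hM_def]
    rw [← h2]
    apply integral_congr_ae
    apply ae_of_all
    intro x
    show f (x - z.1) * g (x - z.2) = f (x - z.1) * g (x - z.1 - (z.2 - z.1))
    have : x - z.1 - (z.2 - z.1) = x - z.2 := by ring
    rw [this]
  -- integrabilities of N, N'
  have hN : Integrable (fun z : ℝ × ℝ => P z * M (z.2 - z.1))
      ((volume : Measure ℝ).prod volume) := by
    have h := hFint.integral_prod_right
    exact h.congr (ae_of_all _ fun z => hz_eq z)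
  have hN' : Integrable (fun z : ℝ × ℝ => P z * M (z.1 - z.2))
      ((volume : Measure ℝ).prod volume) := by
    have h := hN.swap
    apply h.congr
    apply ae_of_all
    intro z
    show P (z.2, z.1) * M (z.1 - z.2) = P z * M (z.1 - z.2)
    rw [hP_def]; show φ z.2 * φ z.1 * _ = φ z.1 * φ z.2 * _; ring
  have hPint : Integrable P ((volume : Measure ℝ).prod volume) := hφint.mul_prod hφint
  have hP1 : ∫ z, P z ∂((volume : Measure ℝ).prod volume) = 1 := by
    rw [hP_def]
    rw [integral_prod_mul φ φ, hφ1, one_mul]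
  have hswapN : ∫ z, P z * M (z.1 - z.2) ∂((volume : Measure ℝ).prod volume)
      = ∫ z, P z * M (z.2 - z.1) ∂((volume : Measure ℝ).prod volume) := by
    have h := integral_prod_swap (μ := (volume : Measure ℝ)) (ν := (volume : Measure ℝ))
      (fun z : ℝ × ℝ => P z * M (z.2 - z.1))
    rw [← h]
    apply integral_congr_ae
    apply ae_of_all
    intro z
    show P z * M (z.1 - z.2) = P (z.swap) * M ((z.swap).2 - (z.swap).1)
    show P z * M (z.1 - z.2) = φ z.2 * φ z.1 * M (z.1 - z.2)
    show φ z.1 * φ z.2 * M (z.1 - z.2) = φ z.2 * φ z.1 * M (z.1 - z.2)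
    ring
  -- rewrite the target difference
  have hgoal_eq : L - (∫ x, (∫ u, φ u * f (x - u)) * (∫ v, φ v * g (x - v)))
      = ∫ z, (P z * L - (P z * M (z.2 - z.1) + P z * M (z.1 - z.2)) / 2)
          ∂((volume : Measure ℝ).prod volume) := by
    have e0 : (∫ x, (∫ u, φ u * f (x - u)) * (∫ v, φ v * g (x - v)))
        = ∫ z, P z * M (z.2 - z.1) ∂((volume : Measure ℝ).prod volume) := by
      rw [← integral_congr_ae (ae_of_all _ hx_eq), hswap]
      exact integral_congr_ae (ae_of_all _ hz_eq)
    have e1 : ∫ z, P z * L ∂((volume : Measure ℝ).prod volume) = L := by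
      rw [MeasureTheory.integral_mul_const, hP1, one_mul]
    have e2 : ∫ z, (P z * M (z.2 - z.1) + P z * M (z.1 - z.2)) / 2
        ∂((volume : Measure ℝ).prod volume)
        = ∫ z, P z * M (z.2 - z.1) ∂((volume : Measure ℝ).prod volume) := by
      rw [integral_div, integral_add hN hN', hswapN]
      ring
    have hPL : Integrable (fun z : ℝ × ℝ => P z * L) ((volume : Measure ℝ).prod volume) :=
      hPint.mul_const L
    have hNsum : Integrable (fun z : ℝ × ℝ => P z * M (z.2 - z.1) + P z * M (z.1 - z.2))
        ((volume : Measure ℝ).prod volume) := hN.add hN'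
    have hNsum2 : Integrable
        (fun z : ℝ × ℝ => (P z * M (z.2 - z.1) + P z * M (z.1 - z.2)) / 2)
        ((volume : Measure ℝ).prod volume) := hNsum.div_const 2
    rw [integral_sub hPL hNsum2, e1, e2, e0]
  -- pointwise identity with J
  have hpt : ∀ z : ℝ × ℝ, P z * L - (P z * M (z.2 - z.1) + P z * M (z.1 - z.2)) / 2
      = P z * ((∫ x, (f x - f (x - (z.2 - z.1))) * (g x - g (x - (z.2 - z.1)))) / 2) := by
    intro z
    have hJ := J_eq hf2 hg2 (z.2 - z.1)
    have h1 : M (z.1 - z.2) = ∫ x, f x * g (x - -(z.2 - z.1)) := by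
      simp only [hM_def, neg_sub]
    have h2 : M (z.2 - z.1) = ∫ x, f x * g (x - (z.2 - z.1)) := by simp only [hM_def]
    rw [hJ, ← hL_def, ← h2, ← h1]
    ring
  -- integrability of the integrand
  have hPL : Integrable (fun z : ℝ × ℝ => P z * L) ((volume : Measure ℝ).prod volume) :=
    hPint.mul_const L
  have hNsum : Integrable (fun z : ℝ × ℝ => P z * M (z.2 - z.1) + P z * M (z.1 - z.2))
      ((volume : Measure ℝ).prod volume) := hN.add hN'
  have hNsum2 : Integrable (fun z : ℝ × ℝ => (P z * M (z.2 - z.1) + P z * M (z.1 - z.2)) / 2)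
      ((volume : Measure ℝ).prod volume) := hNsum.div_const 2
  have hint_h : Integrable
      (fun z : ℝ × ℝ => P z * L - (P z * M (z.2 - z.1) + P z * M (z.1 - z.2)) / 2)
      ((volume : Measure ℝ).prod volume) := hPL.sub hNsum2
  -- dominating function
  have ha : Integrable (fun z : ℝ × ℝ => φ z.1 * (z.2 ^ 2 * φ z.2))
      ((volume : Measure ℝ).prod volume) := hφint.mul_prod (integrable_sq_mul_gauss hv)
  have hb : Integrable (fun z : ℝ × ℝ => (z.1 * φ z.1) * (z.2 * φ z.2))
      ((volume : Measure ℝ).prod volume) :=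
    (integrable_id_mul_gauss hv).mul_prod (integrable_id_mul_gauss hv)
  have hc : Integrable (fun z : ℝ × ℝ => (z.1 ^ 2 * φ z.1) * φ z.2)
      ((volume : Measure ℝ).prod volume) := (integrable_sq_mul_gauss hv).mul_prod hφint
  have hsum : Integrable
      (fun z : ℝ × ℝ => φ z.1 * (z.2 ^ 2 * φ z.2) + (z.1 ^ 2 * φ z.1) * φ z.2)
      ((volume : Measure ℝ).prod volume) := ha.add hc
  have hsub : Integrable
      (fun z : ℝ × ℝ => (φ z.1 * (z.2 ^ 2 * φ z.2) + (z.1 ^ 2 * φ z.1) * φ z.2)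
        - 2 * ((z.1 * φ z.1) * (z.2 * φ z.2)))
      ((volume : Measure ℝ).prod volume) := hsum.sub (hb.const_mul 2)
  have hdom_int : Integrable (fun z : ℝ × ℝ => P z * ((z.2 - z.1) ^ 2 * B / 2))
      ((volume : Measure ℝ).prod volume) := by
    apply (hsub.const_mul (B / 2)).congr
    apply ae_of_all
    intro z
    show B / 2 * _ = P z * ((z.2 - z.1) ^ 2 * B / 2)
    simp only [hP_def]
    ring
  have hdom_val : ∫ z, P z * ((z.2 - z.1) ^ 2 * B / 2) ∂((volume : Measure ℝ).prod volume)
      = σ ^ 2 * B := by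
    have e : (fun z : ℝ × ℝ => P z * ((z.2 - z.1) ^ 2 * B / 2))
        = fun z : ℝ × ℝ => (B / 2) * ((φ z.1 * (z.2 ^ 2 * φ z.2) + (z.1 ^ 2 * φ z.1) * φ z.2)
            - 2 * ((z.1 * φ z.1) * (z.2 * φ z.2))) := by
      funext z
      simp only [hP_def]
      ring
    rw [e, MeasureTheory.integral_const_mul, integral_sub hsum (hb.const_mul 2),
      integral_add ha hc, MeasureTheory.integral_const_mul]
    have v1 : ∫ z, φ z.1 * (z.2 ^ 2 * φ z.2) ∂((volume : Measure ℝ).prod volume) = σ ^ 2 := by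
      rw [integral_prod_mul φ (fun t => t ^ 2 * φ t), hφ1, gauss_moment2 hv, one_mul]
    have v2 : ∫ z, (z.1 ^ 2 * φ z.1) * φ z.2 ∂((volume : Measure ℝ).prod volume) = σ ^ 2 := by
      rw [integral_prod_mul (fun t => t ^ 2 * φ t) φ, hφ1, gauss_moment2 hv, mul_one]
    have v3 : ∫ z, (z.1 * φ z.1) * (z.2 * φ z.2) ∂((volume : Measure ℝ).prod volume) = 0 := by
      rw [integral_prod_mul (fun t => t * φ t) (fun t => t * φ t), gauss_moment1 hv, zero_mul]
    rw [v1, v2, v3]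
    ring
  -- pointwise bound
  have hptb : ∀ z : ℝ × ℝ,
      |P z * L - (P z * M (z.2 - z.1) + P z * M (z.1 - z.2)) / 2|
        ≤ P z * ((z.2 - z.1) ^ 2 * B / 2) := by
    intro z
    rw [hpt z]
    have hPnn : 0 ≤ P z := mul_nonneg (hφnn z.1) (hφnn z.2)
    rw [abs_mul, abs_of_nonneg hPnn, abs_div, abs_two]
    apply mul_le_mul_of_nonneg_left _ hPnn
    rw [div_le_iff₀ (by norm_num : (0:ℝ) < 2)]
    have hJb := J_bound hf'm hfd hf2 hf'2 hg'm hgd hg2 hg'2 (z.2 - z.1)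
    rw [← hB_def] at hJb
    calc |∫ x, (f x - f (x - (z.2 - z.1))) * (g x - g (x - (z.2 - z.1)))|
        ≤ (z.2 - z.1) ^ 2 * B := hJb
      _ = (z.2 - z.1) ^ 2 * B / 2 * 2 := by ring
  -- final computation
  have hfinal : |L - ∫ x, (∫ u, φ u * f (x - u)) * (∫ v, φ v * g (x - v))| ≤ σ ^ 2 * B := by
    rw [hgoal_eq]
    calc |∫ z, (P z * L - (P z * M (z.2 - z.1) + P z * M (z.1 - z.2)) / 2)
            ∂((volume : Measure ℝ).prod volume)|
        ≤ ∫ z, |P z * L - (P z * M (z.2 - z.1) + P z * M (z.1 - z.2)) / 2|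
            ∂((volume : Measure ℝ).prod volume) := by
          have h := norm_integral_le_integral_norm
            (fun z : ℝ × ℝ => P z * L - (P z * M (z.2 - z.1) + P z * M (z.1 - z.2)) / 2)
            (μ := (volume : Measure ℝ).prod volume)
          simpa [Real.norm_eq_abs] using h
      _ ≤ ∫ z, P z * ((z.2 - z.1) ^ 2 * B / 2) ∂((volume : Measure ℝ).prod volume) := by
          apply integral_mono hint_h.abs hdom_int
          intro z
          exact hptb z
      _ = σ ^ 2 * B := hdom_val
  rw [eLpNorm_toReal_eq_sqrt hf'2, eLpNorm_toReal_eq_sqrt hg'2, mul_assoc]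
  rw [← hB_def]
  exact hfinal
end

section
/- For any two square-integrable functions u₀ and v₁ with ‖v₁‖=1, given a compact self-adjoint operator T on L²(ℝ) with eigenvalues (λ_k) and orthonormal eigenbasis (v_k), suppose λ₁ = ‖T‖ > 0 and the spectrum is gapped: λ₁ - |λ_k| ≥ γλ₁ for all k > 1 and some 0 < γ ≤ 1. If |⟨v₁, u₀⟩| ≥ η > 0, then the power method iterates u_{k+1} = T u_k / ‖T u_k‖ satisfy ‖u_k - sign(⟨v₁,u₀⟩)·v₁‖² ≤ 2(1-γ)^{2k}·‖u₀‖²/η². -/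
open Real MeasureTheory
open scoped RealInnerProductSpace

lemma pm_contract {E : Type*} [NormedAddCommGroup E] [InnerProductSpace ℝ E]
    (T : E →L[ℝ] E) (lam : ℕ → ℝ) (v : ℕ → E)
    (horth : Orthonormal ℝ v)
    (hspan : closure ((Submodule.span ℝ (Set.range v) : Submodule ℝ E) : Set E) = Set.univ)
    (heig : ∀ k, T (v k) = lam k • v k)
    (M : ℝ) (hM : 0 ≤ M) (habs : ∀ k, k ≠ 0 → |lam k| ≤ M) :
    ∀ y : E, ⟪v 0, y⟫ = 0 → ‖T y‖ ≤ M * ‖y‖ := by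
  classical
  set Sf : E → E := fun y => T y - (lam 0 * ⟪v 0, y⟫) • v 0 with hSf
  have hcont : Continuous Sf := by
    apply Continuous.sub T.continuous
    exact (continuous_const.mul (continuous_const.inner continuous_id)).smul continuous_const
  have hC : IsClosed {y : E | ‖Sf y‖ ≤ M * ‖y‖} :=
    isClosed_le (hcont.norm) (continuous_const.mul continuous_norm)
  have hsub : ((Submodule.span ℝ (Set.range v) : Submodule ℝ E) : Set E)
      ⊆ {y : E | ‖Sf y‖ ≤ M * ‖y‖} := by
    intro z hz
    obtain ⟨c, rfl⟩ := Finsupp.mem_span_range_iff_exists_finsupp.mp hz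
    set t : Finset ℕ := insert 0 c.support with ht
    have hzeq : (c.sum fun i a => a • v i) = ∑ i ∈ t, c i • v i := by
      apply Finsupp.sum_of_support_subset _ (Finset.subset_insert _ _)
      intro i _; exact zero_smul ℝ (v i)
    have h0t : (0 : ℕ) ∈ t := Finset.mem_insert_self _ _
    set d : ℕ → ℝ := fun i => if i = 0 then 0 else lam i * c i with hd
    have hinner0 : ⟪v 0, ∑ i ∈ t, c i • v i⟫ = c 0 := horth.inner_right_sum c h0t
    have hSfeq : Sf (c.sum fun i a => a • v i) = ∑ i ∈ t, d i • v i := by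
      rw [hSf]
      simp only [hzeq, hinner0]
      rw [map_sum]
      have h1 : ∀ i ∈ t, T (c i • v i) = (lam i * c i) • v i := by
        intro i _
        rw [T.map_smul, heig i, smul_smul, mul_comm]
      rw [Finset.sum_congr rfl h1]
      have h2 : (lam 0 * c 0) • v 0 = ∑ i ∈ t, (if i = 0 then (lam i * c i) • v i else 0) := by
        rw [Finset.sum_ite_eq' t 0 (fun i => (lam i * c i) • v i), if_pos h0t]
      rw [h2, ← Finset.sum_sub_distrib]
      apply Finset.sum_congr rfl
      intro i _
      by_cases hi : i = 0
      · simp [hd, hi]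
      · simp [hd, hi]
    rw [Set.mem_setOf_eq, hSfeq]
    have hnsq : ‖∑ i ∈ t, d i • v i‖ ^ 2 = ∑ i ∈ t, (d i) ^ 2 := by
      rw [← real_inner_self_eq_norm_sq, horth.inner_sum d d t]
      simp [sq]
    have hzsq : ‖∑ i ∈ t, c i • v i‖ ^ 2 = ∑ i ∈ t, (c i) ^ 2 := by
      rw [← real_inner_self_eq_norm_sq, horth.inner_sum c c t]
      simp [sq]
    have hterm : ∀ i ∈ t, (d i) ^ 2 ≤ M ^ 2 * (c i) ^ 2 := by
      intro i _
      by_cases hi : i = 0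
      · have hdi : d i = 0 := by simp [hd, hi]
        rw [hdi]
        simpa using mul_nonneg (sq_nonneg M) (sq_nonneg (c i))
      · simp only [hd, if_neg hi]
        have := habs i hi
        have h3 : |lam i| ^ 2 ≤ M ^ 2 := by nlinarith [abs_nonneg (lam i)]
        calc (lam i * c i) ^ 2 = |lam i| ^ 2 * (c i) ^ 2 := by rw [mul_pow, sq_abs]
          _ ≤ M ^ 2 * (c i) ^ 2 := by nlinarith [sq_nonneg (c i)]
    have hsum : ∑ i ∈ t, (d i) ^ 2 ≤ M ^ 2 * ∑ i ∈ t, (c i) ^ 2 := by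
      rw [Finset.mul_sum]; exact Finset.sum_le_sum hterm
    have hfin : ‖∑ i ∈ t, d i • v i‖ ^ 2 ≤ (M * ‖∑ i ∈ t, c i • v i‖) ^ 2 := by
      rw [hnsq, mul_pow, hzsq]; exact hsum
    rw [hzeq]
    nlinarith [norm_nonneg (∑ i ∈ t, d i • v i), norm_nonneg (∑ i ∈ t, c i • v i),
      mul_nonneg hM (norm_nonneg (∑ i ∈ t, c i • v i))]
  have hall : ∀ y : E, ‖Sf y‖ ≤ M * ‖y‖ := by
    intro y
    have : y ∈ closure ((Submodule.span ℝ (Set.range v) : Submodule ℝ E) : Set E) := by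
      rw [hspan]; trivial
    exact closure_minimal hsub hC this
  intro y hy
  have := hall y
  rw [hSf] at this
  simpa [hy] using this

lemma pm_arith (N A B : ℝ) (hA : 0 < A) (hN : 0 < N) (hAN : A ≤ N) (hB : 0 ≤ B)
    (hNsq : N ^ 2 ≤ A ^ 2 + B) : 2 - 2 * (N⁻¹ * A) ≤ B / A ^ 2 := by
  have e1 : 2 - 2 * (N⁻¹ * A) = (2 * N - 2 * A) / N := by field_simp
  rw [e1, div_le_div_iff₀ hN (pow_pos hA 2)]
  nlinarith [mul_nonneg hA.le (sq_nonneg (N - A)),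
    mul_le_mul_of_nonneg_left hNsq hA.le,
    mul_le_mul_of_nonneg_right hAN hB]

set_option maxHeartbeats 1000000 in
/-- Power method convergence on `L²(ℝ)`: let `T` be a nonzero compact
self-adjoint operator with eigenvalues `(λ_k)` and orthonormal eigenbasis
`(v_k)`, with top eigenvalue `λ₀ = ‖T‖ > 0` and spectral gap
`λ₀ - |λ_k| ≥ γλ₀` for `k ≠ 0` (`0 < γ ≤ 1`).  If `|⟨v₀, u₀⟩| ≥ η > 0`, the
power iterates `u_{k+1} = T u_k / ‖T u_k‖` satisfy
`‖u_k - sign(⟨v₀,u₀⟩)·v₀‖² ≤ 2(1-γ)^{2k}·‖u₀‖²/η²`. -/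
theorem stmt7
    (T : Lp ℝ 2 (volume : Measure ℝ) →L[ℝ] Lp ℝ 2 (volume : Measure ℝ))
    (hTcpt : IsCompactOperator T)
    (hTsa : ∀ x y : Lp ℝ 2 (volume : Measure ℝ), ⟪T x, y⟫ = ⟪x, T y⟫)
    (lam : ℕ → ℝ) (v : ℕ → Lp ℝ 2 (volume : Measure ℝ))
    (horth : Orthonormal ℝ v)
    (hspan : (Submodule.span ℝ (Set.range v)).topologicalClosure = ⊤)
    (heig : ∀ k, T (v k) = lam k • v k)
    (htop : ‖T‖ = lam 0) (htoppos : 0 < lam 0)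
    (γ : ℝ) (hγ0 : 0 < γ) (hγ1 : γ ≤ 1)
    (hgap : ∀ k : ℕ, k ≠ 0 → γ * lam 0 ≤ lam 0 - |lam k|)
    (u₀ : Lp ℝ 2 (volume : Measure ℝ)) (η : ℝ) (hη : 0 < η)
    (hcorr : η ≤ |⟪v 0, u₀⟫|)
    (u : ℕ → Lp ℝ 2 (volume : Measure ℝ)) (hu0 : u 0 = u₀)
    (hurec : ∀ k, u (k + 1) = ‖T (u k)‖⁻¹ • T (u k)) :
    ∀ k : ℕ, 1 ≤ k →
      ‖u k - Real.sign ⟪v 0, u₀⟫ • v 0‖ ^ 2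
        ≤ 2 * (1 - γ) ^ (2 * k) * ‖u₀‖ ^ 2 / η ^ 2 := by
  classical
  set c0 : ℝ := ⟪v 0, u₀⟫ with hc0
  have hc0pos : 0 < |c0| := lt_of_lt_of_le hη hcorr
  have hc0ne : c0 ≠ 0 := by
    intro h; rw [h] at hc0pos; simp at hc0pos
  set M : ℝ := (1 - γ) * lam 0 with hMdef
  have hM0 : 0 ≤ M := mul_nonneg (by linarith) htoppos.le
  have habs : ∀ k, k ≠ 0 → |lam k| ≤ M := by
    intro k hk
    have := hgap k hk
    rw [hMdef]; nlinarith
  have hspan' : closure ((Submodule.span ℝ (Set.range v) :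
      Submodule ℝ (Lp ℝ 2 (volume : Measure ℝ))) : Set (Lp ℝ 2 (volume : Measure ℝ)))
      = Set.univ := by
    have h := congrArg (SetLike.coe) hspan
    rw [Submodule.topologicalClosure_coe] at h
    rw [h]; rfl
  have hS := pm_contract T lam v horth hspan' heig M hM0 habs
  have hvA : ∀ y, ⟪v 0, T y⟫ = lam 0 * ⟪v 0, y⟫ := by
    intro y
    rw [← hTsa, heig 0, real_inner_smul_left]
  have hv00 : ⟪v 0, v 0⟫ = (1 : ℝ) := by
    rw [real_inner_self_eq_norm_sq, horth.1 0]; norm_num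
  set x : ℕ → Lp ℝ 2 (volume : Measure ℝ) := fun k => (T ^ k) u₀ with hx
  set w : Lp ℝ 2 (volume : Measure ℝ) := u₀ - c0 • v 0 with hw
  set y : ℕ → Lp ℝ 2 (volume : Measure ℝ) := fun k => (T ^ k) w with hy
  have hx0 : x 0 = u₀ := by simp [hx]
  have hy0 : y 0 = w := by simp [hy]
  have hxsucc : ∀ k, x (k + 1) = T (x k) := by
    intro k
    simp [hx, pow_succ', ContinuousLinearMap.mul_apply]
    rw [← Function.iterate_succ_apply, Function.iterate_succ_apply']
  have hysucc : ∀ k, y (k + 1) = T (y k) := by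
    intro k
    simp [hy, pow_succ', ContinuousLinearMap.mul_apply]
    rw [← Function.iterate_succ_apply, Function.iterate_succ_apply']
  have hinner_x : ∀ k, ⟪v 0, x k⟫ = lam 0 ^ k * c0 := by
    intro k
    induction k with
    | zero => simp [hx0, hc0]
    | succ n ih => rw [hxsucc, hvA, ih, pow_succ]; ring
  have hinner_y : ∀ k, ⟪v 0, y k⟫ = 0 := by
    intro k
    induction k with
    | zero =>
        rw [hy0, hw, inner_sub_right, real_inner_smul_right, hv00, ← hc0]
        ring
    | succ n ih => rw [hysucc, hvA, ih, mul_zero]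
  have hy_bound : ∀ k, ‖y k‖ ≤ M ^ k * ‖w‖ := by
    intro k
    induction k with
    | zero => simp [hy0]
    | succ n ih =>
        rw [hysucc]
        calc ‖T (y n)‖ ≤ M * ‖y n‖ := hS (y n) (hinner_y n)
          _ ≤ M * (M ^ n * ‖w‖) := by
              exact mul_le_mul_of_nonneg_left ih hM0
          _ = M ^ (n + 1) * ‖w‖ := by rw [pow_succ]; ring
  have hx_dec : ∀ k, x k = (lam 0 ^ k * c0) • v 0 + y k := by
    intro k
    induction k with
    | zero =>
        rw [hx0, hy0, hw]
        simp
    | succ n ih =>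
        rw [hxsucc, ih, map_add, ContinuousLinearMap.map_smul, heig 0, ← hysucc,
          smul_smul, pow_succ]
        ring_nf
  have hN_low : ∀ k, lam 0 ^ k * |c0| ≤ ‖x k‖ := by
    intro k
    have h1 := abs_real_inner_le_norm (v 0) (x k)
    rw [hinner_x, horth.1 0, one_mul, abs_mul, abs_pow, abs_of_pos htoppos] at h1
    exact h1
  have hApos : ∀ k, 0 < lam 0 ^ k * |c0| := fun k =>
    mul_pos (pow_pos htoppos k) hc0pos
  have hNpos : ∀ k, 0 < ‖x k‖ := fun k => lt_of_lt_of_le (hApos k) (hN_low k)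
  have hx_norm_sq : ∀ k, ‖x k‖ ^ 2 = (lam 0 ^ k * c0) ^ 2 + ‖y k‖ ^ 2 := by
    intro k
    rw [hx_dec k, norm_add_sq_real, real_inner_smul_left, hinner_y, norm_smul]
    simp [horth.1 0, sq_abs, mul_pow, abs_of_pos htoppos]
  have hw_le : ‖w‖ ^ 2 ≤ ‖u₀‖ ^ 2 := by
    have : ‖w‖ ^ 2 = ‖u₀‖ ^ 2 - c0 ^ 2 := by
      rw [hw, norm_sub_sq_real, real_inner_smul_right, real_inner_comm, ← hc0,
        norm_smul]
      simp [horth.1 0, sq_abs, mul_pow]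
      ring
    nlinarith [sq_nonneg c0]
  have huk : ∀ k, u (k + 1) = ‖x (k + 1)‖⁻¹ • x (k + 1) := by
    intro k
    induction k with
    | zero =>
        rw [hurec 0, hu0, ← hx0, ← hxsucc 0]
    | succ n ih =>
        have hne : ‖x (n + 1)‖ ≠ 0 := (hNpos (n + 1)).ne'
        have hne2 : ‖x (n + 2)‖ ≠ 0 := (hNpos (n + 2)).ne'
        rw [hurec (n + 1), ih, ContinuousLinearMap.map_smul, ← hxsucc (n + 1),
          norm_smul, smul_smul]
        congr 1
        rw [norm_inv, norm_norm, mul_inv, inv_inv, mul_right_comm,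
          mul_inv_cancel₀ hne, one_mul]
  intro k hk
  obtain ⟨j, rfl⟩ : ∃ j, k = j + 1 := ⟨k - 1, (Nat.succ_pred_eq_of_pos hk).symm⟩
  set N : ℝ := ‖x (j + 1)‖ with hN
  set A : ℝ := lam 0 ^ (j + 1) * |c0| with hA
  set s : ℝ := Real.sign c0 with hs
  have hsc : s * c0 = |c0| := by
    rcases lt_trichotomy c0 0 with h | h | h
    · rw [hs, Real.sign_of_neg h, abs_of_neg h]; ring
    · exact absurd h hc0ne
    · rw [hs, Real.sign_of_pos h, abs_of_pos h]; ring
  have hs2 : s ^ 2 = 1 := by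
    rcases lt_trichotomy c0 0 with h | h | h
    · rw [hs, Real.sign_of_neg h]; norm_num
    · exact absurd h hc0ne
    · rw [hs, Real.sign_of_pos h]; norm_num
  have hNA : A ≤ N := hN_low (j + 1)
  have hApos' : 0 < A := hApos (j + 1)
  have hNpos' : 0 < N := hNpos (j + 1)
  have hNne : N ≠ 0 := hNpos'.ne'
  -- compute the left side
  have hLHS : ‖u (j + 1) - s • v 0‖ ^ 2 = 2 - 2 * (N⁻¹ * A) := by
    rw [norm_sub_sq_real]
    have h1 : ‖u (j + 1)‖ = 1 := by
      rw [huk j, norm_smul, norm_inv, norm_norm, ← hN, inv_mul_cancel₀ hNne]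
    have h2 : ⟪u (j + 1), s • v 0⟫ = N⁻¹ * A := by
      rw [huk j, real_inner_smul_right, real_inner_smul_left, real_inner_comm,
        hinner_x, ← hN]
      have : s * (N⁻¹ * (lam 0 ^ (j + 1) * c0)) = N⁻¹ * (lam 0 ^ (j + 1) * (s * c0)) := by ring
      rw [this, hsc, ← hA]
    have h3 : ‖s • v 0‖ ^ 2 = 1 := by
      rw [norm_smul]
      simp [horth.1 0, mul_pow, sq_abs, hs2]
    rw [h1, h2, h3]
    ring
  rw [hLHS]
  -- the norm bound
  set G : ℝ := (1 - γ) ^ (j + 1) with hG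
  set L : ℝ := lam 0 ^ (j + 1) with hL
  have hLpos : 0 < L := pow_pos htoppos (j + 1)
  have hG0 : 0 ≤ G := pow_nonneg (by linarith) (j + 1)
  have hNsq : N ^ 2 ≤ A ^ 2 + G ^ 2 * L ^ 2 * ‖u₀‖ ^ 2 := by
    have h1 := hx_norm_sq (j + 1)
    have h2 : ‖y (j + 1)‖ ^ 2 ≤ (M ^ (j + 1)) ^ 2 * ‖w‖ ^ 2 := by
      have := hy_bound (j + 1)
      nlinarith [norm_nonneg (y (j + 1)), mul_nonneg (pow_nonneg hM0 (j + 1)) (norm_nonneg w)]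
    have h3 : (M ^ (j + 1)) ^ 2 = G ^ 2 * L ^ 2 := by
      rw [hMdef, hG, hL, mul_pow, mul_pow]
    have h4 : (lam 0 ^ (j + 1) * c0) ^ 2 = A ^ 2 := by
      rw [hA, mul_pow, mul_pow, sq_abs]
    have h5 : G ^ 2 * L ^ 2 * ‖w‖ ^ 2 ≤ G ^ 2 * L ^ 2 * ‖u₀‖ ^ 2 := by
      apply mul_le_mul_of_nonneg_left hw_le
      positivity
    rw [← hN] at h1
    nlinarith
  have hη2 : η ^ 2 ≤ c0 ^ 2 := by
    nlinarith [hc0pos, hcorr, abs_nonneg c0, sq_abs c0]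
  have hA2 : A ^ 2 = L ^ 2 * c0 ^ 2 := by
    rw [hA, hL, mul_pow, sq_abs]
  have key : 2 - 2 * (N⁻¹ * A) ≤ G ^ 2 * L ^ 2 * ‖u₀‖ ^ 2 / A ^ 2 :=
    pm_arith N A _ hApos' hNpos' hNA (by positivity) hNsq
  have key2 : G ^ 2 * L ^ 2 * ‖u₀‖ ^ 2 / A ^ 2 = G ^ 2 * ‖u₀‖ ^ 2 / c0 ^ 2 := by
    rw [hA2]
    field_simp
  have key3 : G ^ 2 * ‖u₀‖ ^ 2 / c0 ^ 2 ≤ G ^ 2 * ‖u₀‖ ^ 2 / η ^ 2 :=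
    div_le_div_of_nonneg_left (by positivity) (by positivity) hη2
  have hGexp : G ^ 2 = (1 - γ) ^ (2 * (j + 1)) := by
    rw [hG, ← pow_mul, mul_comm]
  have hQ : 0 ≤ G ^ 2 * ‖u₀‖ ^ 2 / η ^ 2 := by positivity
  have final : G ^ 2 * ‖u₀‖ ^ 2 / η ^ 2 ≤ 2 * (1 - γ) ^ (2 * (j + 1)) * ‖u₀‖ ^ 2 / η ^ 2 := by
    rw [← hGexp]
    have e : 2 * G ^ 2 * ‖u₀‖ ^ 2 / η ^ 2
        = G ^ 2 * ‖u₀‖ ^ 2 / η ^ 2 + G ^ 2 * ‖u₀‖ ^ 2 / η ^ 2 := by ring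
    linarith [hQ, e.le, e.ge]
  linarith [key, key2.le, key3, final, key2.ge]
end

section
/- Under the hypotheses of the power method convergence lemma (compact self-adjoint T with gapped positive top eigenvalue λ₁, initialization correlation ≥ η), if additionally k ≥ log(η/(4‖u₀‖))/log(1-γ), then the rank-one approximating factor satisfies ‖√(u_kᵀ T u_k)·u_k - √λ₁·sign(⟨v₁,u₀⟩)·v₁‖² ≤ 18·λ₁·(1-γ)^{2k}·‖u₀‖²/η². -/
open Real MeasureTheory
open scoped RealInnerProductSpace

set_option maxHeartbeats 1600000 in
/-- Rank-one approximating factor bound for the power method: under the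
hypotheses of the power-method convergence lemma (compact self-adjoint `T`
with gapped positive top eigenvalue `λ₀ = ‖T‖`, initialization correlation
`|⟨v₀,u₀⟩| ≥ η`), if additionally `k ≥ log(η/(4‖u₀‖))/log(1-γ)`, then
`‖√(⟨u_k, T u_k⟩)·u_k - √λ₀·sign(⟨v₀,u₀⟩)·v₀‖² ≤ 18λ₀(1-γ)^{2k}‖u₀‖²/η²`. -/
theorem stmt8
    (T : Lp ℝ 2 (volume : Measure ℝ) →L[ℝ] Lp ℝ 2 (volume : Measure ℝ))
    (hTcpt : IsCompactOperator T)
    (hTsa : ∀ x y : Lp ℝ 2 (volume : Measure ℝ), ⟪T x, y⟫ = ⟪x, T y⟫)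
    (lam : ℕ → ℝ) (v : ℕ → Lp ℝ 2 (volume : Measure ℝ))
    (horth : Orthonormal ℝ v)
    (hspan : (Submodule.span ℝ (Set.range v)).topologicalClosure = ⊤)
    (heig : ∀ k, T (v k) = lam k • v k)
    (htop : ‖T‖ = lam 0) (htoppos : 0 < lam 0)
    (γ : ℝ) (hγ0 : 0 < γ) (hγ1 : γ ≤ 1)
    (hgap : ∀ k : ℕ, k ≠ 0 → γ * lam 0 ≤ lam 0 - |lam k|)
    (u₀ : Lp ℝ 2 (volume : Measure ℝ)) (η : ℝ) (hη : 0 < η)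
    (hcorr : η ≤ |⟪v 0, u₀⟫|)
    (u : ℕ → Lp ℝ 2 (volume : Measure ℝ)) (hu0 : u 0 = u₀)
    (hurec : ∀ k, u (k + 1) = ‖T (u k)‖⁻¹ • T (u k)) :
    ∀ k : ℕ, 1 ≤ k →
      Real.log (η / (4 * ‖u₀‖)) / Real.log (1 - γ) ≤ (k : ℝ) →
      ‖Real.sqrt ⟪u k, T (u k)⟫ • u k
          - (Real.sqrt (lam 0) * Real.sign ⟪v 0, u₀⟫) • v 0‖ ^ 2
        ≤ 18 * lam 0 * (1 - γ) ^ (2 * k) * ‖u₀‖ ^ 2 / η ^ 2 := by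
  intro k hk1 _hlog
  classical
  set c : ℕ → ℝ := fun j => ⟪v j, u₀⟫ with hcdef
  have hcorr' : η ≤ |c 0| := hcorr
  have hc0 : c 0 ≠ 0 := by
    intro h
    rw [h, abs_zero] at hcorr'
    exact absurd hcorr' (not_le.mpr hη)
  -- the Hilbert basis
  obtain ⟨b, hb⟩ : ∃ b : HilbertBasis ℕ ℝ (Lp ℝ 2 (volume : Measure ℝ)), ⇑b = v :=
    ⟨HilbertBasis.mk horth hspan.ge, HilbertBasis.coe_mk _ _⟩
  have parseval : ∀ x : Lp ℝ 2 (volume : Measure ℝ), HasSum (fun j => ⟪v j, x⟫ ^ 2) (‖x‖ ^ 2) := by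
    intro x
    have h := b.hasSum_inner_mul_inner x x
    rw [real_inner_self_eq_norm_sq] at h
    have hfun : (fun j => ⟪v j, x⟫ ^ 2) = fun i => ⟪x, b i⟫ * ⟪b i, x⟫ := by
      funext j
      rw [hb, sq, real_inner_comm]
    rw [hfun]; exact h
  -- coordinates of iterates
  have hTcoord : ∀ (j : ℕ) (x : Lp ℝ 2 (volume : Measure ℝ)), ⟪v j, T x⟫ = lam j * ⟪v j, x⟫ := by
    intro j x
    rw [← hTsa, heig, inner_smul_left]
    simp
  have hcoord : ∀ (n : ℕ) (j : ℕ), ⟪v j, (T ^ n) u₀⟫ = lam j ^ n * c j := by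
    intro n
    induction n with
    | zero => intro j; simp; rfl
    | succ m ih =>
      intro j
      have : (T ^ (m + 1)) u₀ = T ((T ^ m) u₀) := by
        rw [pow_succ']; rfl
      rw [this, hTcoord, ih, pow_succ']
      ring
  have hNsum : ∀ n : ℕ, HasSum (fun j => (lam j ^ n * c j) ^ 2) (‖(T ^ n) u₀‖ ^ 2) := by
    intro n
    have h := parseval ((T ^ n) u₀)
    convert h using 2 with j
    rw [hcoord]
  have hcsum : HasSum (fun j => (c j) ^ 2) (‖u₀‖ ^ 2) := by
    have h := hNsum 0
    simpa using h
  set N : ℕ → ℝ := fun n => ‖(T ^ n) u₀‖ with hNdef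
  have hNnonneg : ∀ n, 0 ≤ N n := fun n => norm_nonneg _
  set a : ℕ → ℝ := fun n => lam 0 ^ n * |c 0| with hadef
  have hapos : ∀ n, 0 < a n :=
    fun n => mul_pos (pow_pos htoppos n) (abs_pos.mpr hc0)
  have ha_le_N : ∀ n, a n ≤ N n := by
    intro n
    have h0 : (lam 0 ^ n * c 0) ^ 2 ≤ N n ^ 2 :=
      le_hasSum (hNsum n) 0 (fun j _ => sq_nonneg _)
    have h1 : a n ^ 2 ≤ N n ^ 2 := by
      have : a n ^ 2 = (lam 0 ^ n * c 0) ^ 2 := by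
        rw [hadef]; simp [mul_pow, sq_abs]
      rw [this]; exact h0
    calc a n = Real.sqrt (a n ^ 2) := (Real.sqrt_sq (hapos n).le).symm
      _ ≤ Real.sqrt (N n ^ 2) := Real.sqrt_le_sqrt h1
      _ = N n := Real.sqrt_sq (hNnonneg n)
  have hN_lower : ∀ n, lam 0 ^ n * η ≤ N n := by
    intro n
    refine le_trans ?_ (ha_le_N n)
    exact mul_le_mul_of_nonneg_left hcorr' (pow_pos htoppos n).le
  have hN_pos : ∀ n, 0 < N n := fun n => lt_of_lt_of_le (hapos n) (ha_le_N n)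
  -- tail bound
  have h1γ : 0 ≤ 1 - γ := by linarith
  have htail : ∀ n : ℕ, N n ^ 2 ≤ a n ^ 2 + ((1 - γ) * lam 0) ^ (2 * n) * ‖u₀‖ ^ 2 := by
    intro n
    set g : ℕ → ℝ := fun j => ((1 - γ) * lam 0) ^ (2 * n) * (c j) ^ 2 with hgdef
    have hgsum : HasSum g (((1 - γ) * lam 0) ^ (2 * n) * ‖u₀‖ ^ 2) := hcsum.mul_left _
    have hssum : HasSum (fun j => if j = 0 then a n ^ 2 - g 0 else 0) (a n ^ 2 - g 0) :=
      hasSum_ite_eq 0 _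
    have hhsum : HasSum (fun j => g j + if j = 0 then a n ^ 2 - g 0 else 0)
        (((1 - γ) * lam 0) ^ (2 * n) * ‖u₀‖ ^ 2 + (a n ^ 2 - g 0)) := hgsum.add hssum
    have hle : ∀ j, (lam j ^ n * c j) ^ 2 ≤ g j + if j = 0 then a n ^ 2 - g 0 else 0 := by
      intro j
      by_cases hj : j = 0
      · subst hj
        simp only [if_pos]
        have : (lam 0 ^ n * c 0) ^ 2 = a n ^ 2 := by
          rw [hadef]; simp [mul_pow, sq_abs]
        rw [this]; exact le_of_eq (by ring)
      · simp only [if_neg hj, add_zero]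
        have hgap' : |lam j| ≤ (1 - γ) * lam 0 := by
          have := hgap j hj; linarith
        have h1 : (lam j ^ n) ^ 2 ≤ (((1 - γ) * lam 0) ^ n) ^ 2 := by
          have h2 : |lam j ^ n| ≤ ((1 - γ) * lam 0) ^ n := by
            rw [abs_pow]
            exact pow_le_pow_left₀ (abs_nonneg _) hgap' n
          calc (lam j ^ n) ^ 2 = |lam j ^ n| ^ 2 := (sq_abs _).symm
            _ ≤ (((1 - γ) * lam 0) ^ n) ^ 2 :=
                pow_le_pow_left₀ (abs_nonneg _) h2 2
        calc (lam j ^ n * c j) ^ 2 = (lam j ^ n) ^ 2 * c j ^ 2 := by ring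
          _ ≤ (((1 - γ) * lam 0) ^ n) ^ 2 * c j ^ 2 :=
              mul_le_mul_of_nonneg_right h1 (sq_nonneg _)
          _ = g j := by rw [hgdef]; rw [← pow_mul]; ring_nf
    have := hasSum_le hle (hNsum n) hhsum
    have hg0 : 0 ≤ g 0 := mul_nonneg (pow_nonneg (mul_nonneg h1γ htoppos.le) _) (sq_nonneg _)
    linarith
  -- formula for u n
  have huform : ∀ n : ℕ, 1 ≤ n → u n = (N n)⁻¹ • (T ^ n) u₀ := by
    intro n
    induction n with
    | zero => omega
    | succ m ih =>
      intro _
      by_cases hm : m = 0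
      · subst hm
        rw [hurec 0, hu0]
        congr 1 <;> simp [hNdef]
      · have hm1 : 1 ≤ m := Nat.one_le_iff_ne_zero.mpr hm
        rw [hurec m, ih hm1]
        have hTum : T ((N m)⁻¹ • (T ^ m) u₀) = (N m)⁻¹ • (T ^ (m + 1)) u₀ := by
          rw [_root_.map_smul]
          congr 1
          rw [pow_succ']; rfl
        rw [hTum, norm_smul, smul_smul]
        congr 1
        rw [norm_inv, norm_norm]
        have h1 : ‖(T ^ (m + 1)) u₀‖ = N (m + 1) := rfl
        rw [h1, mul_inv, inv_inv]
        field_simp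
        rw [show ‖(T ^ m) u₀‖ = N m from rfl, mul_comm (N (m+1)) (N m), ← div_div,
          div_self (hN_pos m).ne', one_div]
  have huk := huform k hk1
  have hnormuk : ‖u k‖ = 1 := by
    rw [huk, norm_smul, norm_inv, norm_norm]
    exact inv_mul_cancel₀ (hN_pos k).ne'
  -- sign facts
  set s : ℝ := Real.sign ⟪v 0, u₀⟫ with hsdef
  have hsc : s * c 0 = |c 0| := by
    rcases lt_trichotomy (c 0) 0 with h | h | h
    · rw [hsdef, show ⟪v 0, u₀⟫ = c 0 from rfl, Real.sign_of_neg h, abs_of_neg h]; ring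
    · exact absurd h hc0
    · rw [hsdef, show ⟪v 0, u₀⟫ = c 0 from rfl, Real.sign_of_pos h, abs_of_pos h]; ring
  have hs1 : s = 1 ∨ s = -1 := by
    rcases lt_trichotomy (c 0) 0 with h | h | h
    · right; rw [hsdef, show ⟪v 0, u₀⟫ = c 0 from rfl, Real.sign_of_neg h]
    · exact absurd h hc0
    · left; rw [hsdef, show ⟪v 0, u₀⟫ = c 0 from rfl, Real.sign_of_pos h]
  have hs2 : s * s = 1 := by rcases hs1 with h | h <;> rw [h] <;> ring
  have hsabs : |s| = 1 := by rcases hs1 with h | h <;> rw [h] <;> simp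
  set w : Lp ℝ 2 (volume : Measure ℝ) := s • v 0 with hwdef
  have hnormv0 : ‖v 0‖ = 1 := horth.1 0
  have hnormw : ‖w‖ = 1 := by rw [hwdef, norm_smul, Real.norm_eq_abs, hsabs, hnormv0]; ring
  -- inner product of u k with w
  have hinner_uk_w : ⟪u k, w⟫ = (N k)⁻¹ * a k := by
    rw [hwdef, inner_smul_right, huk, inner_smul_left, real_inner_comm,
      show ⟪v 0, (T ^ k) u₀⟫ = lam 0 ^ k * c 0 from hcoord k 0]
    simp only [RCLike.star_def, conj_trivial]
    rw [hadef]
    rw [show s * ((N k)⁻¹ * (lam 0 ^ k * c 0)) = (N k)⁻¹ * (lam 0 ^ k * (s * c 0)) by ring, hsc]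
  -- distance bound
  set δ : ℝ := ‖u k - w‖ with hδdef
  have hδnonneg : 0 ≤ δ := norm_nonneg _
  set ε : ℝ := (1 - γ) ^ (2 * k) * ‖u₀‖ ^ 2 / η ^ 2 with hεdef
  have hδsq : δ ^ 2 ≤ 2 * ε := by
    have hexp : δ ^ 2 = 2 - 2 * ((N k)⁻¹ * a k) := by
      rw [hδdef, norm_sub_sq_real, hnormuk, hnormw, hinner_uk_w]; ring
    set τ : ℝ := ((1 - γ) * lam 0) ^ (2 * k) * ‖u₀‖ ^ 2 with hτdef
    have hτnonneg : 0 ≤ τ :=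
      mul_nonneg (pow_nonneg (mul_nonneg h1γ htoppos.le) _) (sq_nonneg _)
    have hNa : (N k - a k) * N k ≤ τ := by
      have h1 : (N k - a k) * N k ≤ (N k - a k) * (N k + a k) := by
        apply mul_le_mul_of_nonneg_left _ (by linarith [ha_le_N k])
        linarith [(hapos k).le]
      have h2 : (N k - a k) * (N k + a k) = N k ^ 2 - a k ^ 2 := by ring
      have h3 := htail k
      linarith
    have hkey : δ ^ 2 ≤ 2 * (τ / N k ^ 2) := by
      rw [hexp]
      have hN := hN_pos k
      have h1 : (N k)⁻¹ * a k = a k / N k := by rw [div_eq_mul_inv]; ring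
      have h2 : 2 - 2 * (a k / N k) = (2 * N k ^ 2 - 2 * (a k * N k)) / N k ^ 2 := by
        field_simp
      rw [h1, h2, ← mul_div_assoc]
      apply div_le_div_of_nonneg_right (by linarith) (by positivity)
    refine hkey.trans ?_
    have hτN : τ / N k ^ 2 ≤ ε := by
      have hNk2 : (lam 0 ^ k * η) ^ 2 ≤ N k ^ 2 := by
        have := hN_lower k
        have h0 : 0 ≤ lam 0 ^ k * η := by positivity
        nlinarith
      have h1 : τ / N k ^ 2 ≤ τ / (lam 0 ^ k * η) ^ 2 := by
        apply div_le_div_of_nonneg_left hτnonneg (by positivity) hNk2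
      refine h1.trans (le_of_eq ?_)
      rw [hτdef, hεdef]
      rw [mul_pow, pow_mul, mul_pow, ← pow_mul, ← pow_mul]
      have hl : (lam 0 ^ (k * 2) : ℝ) ≠ 0 := by positivity
      field_simp
      ring
    linarith
  -- Rayleigh quotient facts
  set lk : ℝ := ⟪u k, T (u k)⟫ with hlkdef
  have hlk_le : lk ≤ lam 0 := by
    calc lk ≤ ‖u k‖ * ‖T (u k)‖ := real_inner_le_norm _ _
      _ ≤ ‖u k‖ * (‖T‖ * ‖u k‖) := by
          apply mul_le_mul_of_nonneg_left (T.le_opNorm _) (norm_nonneg _)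
      _ = lam 0 := by rw [hnormuk, htop]; ring
  have hTw : T w = lam 0 • w := by
    rw [hwdef, _root_.map_smul, heig, smul_comm]
  have hwTw : ⟪w, T w⟫ = lam 0 := by
    rw [hTw, inner_smul_right, real_inner_self_eq_norm_sq, hnormw]
    simp
  have hnormTw : ‖T w‖ = lam 0 := by
    rw [hTw, norm_smul, hnormw, Real.norm_eq_abs, abs_of_pos htoppos]; ring
  have hdiff : lam 0 - lk ≤ 2 * lam 0 * δ := by
    have hsplit : lam 0 - lk = ⟪w - u k, T w⟫ + ⟪u k, T (w - u k)⟫ := by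
      rw [map_sub, inner_sub_left, inner_sub_right, hwTw, hlkdef]
      ring
    have hb1 : ⟪w - u k, T w⟫ ≤ δ * lam 0 := by
      calc ⟪w - u k, T w⟫ ≤ ‖w - u k‖ * ‖T w‖ := real_inner_le_norm _ _
        _ = δ * lam 0 := by rw [norm_sub_rev, hnormTw]
    have hb2 : ⟪u k, T (w - u k)⟫ ≤ lam 0 * δ := by
      calc ⟪u k, T (w - u k)⟫ ≤ ‖u k‖ * ‖T (w - u k)‖ := real_inner_le_norm _ _
        _ ≤ ‖u k‖ * (‖T‖ * ‖w - u k‖) := by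
            apply mul_le_mul_of_nonneg_left (T.le_opNorm _) (norm_nonneg _)
        _ = lam 0 * δ := by rw [hnormuk, htop, norm_sub_rev]; ring
    linarith
  -- sqrt facts
  set r : ℝ := Real.sqrt (lam 0) with hrdef
  have hrpos : 0 < r := Real.sqrt_pos.mpr htoppos
  have hr2 : r * r = lam 0 := Real.mul_self_sqrt htoppos.le
  set q : ℝ := Real.sqrt lk with hqdef
  have hq_le : q ≤ r := Real.sqrt_le_sqrt hlk_le
  have hqnonneg : 0 ≤ q := Real.sqrt_nonneg _
  have hsqdiff : r - q ≤ 2 * r * δ := by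
    have hkey : (r - q) * r ≤ lam 0 - lk := by
      by_cases hlk : 0 ≤ lk
      · have hq2 : q * q = lk := Real.mul_self_sqrt hlk
        have h1 : (r - q) * r ≤ (r - q) * (r + q) :=
          mul_le_mul_of_nonneg_left (by linarith) (by linarith)
        have h2 : (r - q) * (r + q) = lam 0 - lk := by
          rw [← hr2, ← hq2]; ring
        linarith
      · have hq0 : q = 0 := Real.sqrt_eq_zero'.mpr (le_of_not_ge hlk)
        rw [hq0]
        have : r * r = lam 0 := hr2
        linarith [le_of_not_ge hlk]
    have := mul_le_mul_of_nonneg_right hdiff (le_refl (0:ℝ))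
    nlinarith [hkey, hdiff, hrpos]
  -- final assembly
  have hgoal_eq : (r * s) • v 0 = r • w := by
    rw [hwdef, smul_smul]
  rw [hgoal_eq]
  have hEsplit : q • u k - r • w = q • (u k - w) + (q - r) • w := by
    rw [smul_sub, sub_smul]; abel
  have hE : ‖q • u k - r • w‖ ≤ 3 * r * δ := by
    rw [hEsplit]
    calc ‖q • (u k - w) + (q - r) • w‖ ≤ ‖q • (u k - w)‖ + ‖(q - r) • w‖ := norm_add_le _ _
      _ = q * δ + (r - q) := by
          rw [norm_smul, norm_smul, hnormw, Real.norm_eq_abs, Real.norm_eq_abs,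
            abs_of_nonneg hqnonneg, abs_sub_comm, abs_of_nonneg (by linarith)]
          ring
      _ ≤ r * δ + 2 * r * δ := by
          have := mul_le_mul_of_nonneg_right hq_le hδnonneg
          linarith
      _ = 3 * r * δ := by ring
  have hfinal : ‖q • u k - r • w‖ ^ 2 ≤ 9 * lam 0 * δ ^ 2 := by
    calc ‖q • u k - r • w‖ ^ 2 ≤ (3 * r * δ) ^ 2 :=
        pow_le_pow_left₀ (norm_nonneg _) hE 2
      _ = 9 * (r * r) * δ ^ 2 := by ring
      _ = 9 * lam 0 * δ ^ 2 := by rw [hr2]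
  have h18 : 9 * lam 0 * δ ^ 2 ≤ 18 * lam 0 * (1 - γ) ^ (2 * k) * ‖u₀‖ ^ 2 / η ^ 2 := by
    have h1 : 9 * lam 0 * δ ^ 2 ≤ 9 * lam 0 * (2 * ε) := by
      apply mul_le_mul_of_nonneg_left hδsq (by positivity)
    refine h1.trans (le_of_eq ?_)
    rw [hεdef]; field_simp; ring
  linarith
end
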